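/- arXiv:alg-geom/9709010 — 7 statements merged into one kernel-verified Lean document; each statement's English description precedes it below -/
import Mathlib

section
/- Let Σ be a complete regular fan in N_ℝ (dim N_ℝ = d) with Σ₁ the set of primitive generators of its one-dimensional cones, and let φ be a Σ-piecewise linear complex-valued function with Re(φ(e)) > 0 for all e ∈ Σ₁. Let q > 1 and let χ : N → S¹ be a group homomorphism. Then ∑_{n ∈ N} q^{−φ(n)} χ(n) converges absolutely and equals ∑_{σ ∈ Σ} ∏_{e ∈ σ ∩ Σ₁} (χ(e) q^{−φ(e)}) / (1 − χ(e) q^{−φ(e)}). -/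
/-- The cone in `ℝ^d` generated by a finite set `s` of lattice vectors. -/
def coneOf {d : ℕ} (s : Finset (Fin d → ℤ)) : Set (Fin d → ℝ) :=
  {x | ∃ c : (Fin d → ℤ) → ℝ, (∀ e, 0 ≤ c e) ∧ x = ∑ e ∈ s, c e • (fun j => (e j : ℝ))}

namespace Stmt7Aux


open Matrix
open Module

variable {d : ℕ}

def rv {d : ℕ} (n : Fin d → ℤ) : Fin d → ℝ := fun j => (n j : ℝ)

lemma rv_sum {ι : Type*} (t : Finset ι) (g : ι → Fin d → ℤ) :
    rv (∑ i ∈ t, g i) = ∑ i ∈ t, rv (g i) := by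
  funext j
  simp [rv, Finset.sum_apply]

lemma rv_zsmul (k : ℤ) (a : Fin d → ℤ) : rv (k • a) = (k : ℝ) • rv a := by
  funext j; simp [rv]

lemma rv_nsmul (k : ℕ) (a : Fin d → ℤ) : rv (k • a) = (k : ℝ) • rv a := by
  funext j; simp [rv]

lemma exists_realBasis (b : Basis (Fin d) ℤ (Fin d → ℤ)) :
    ∃ B : Basis (Fin d) ℝ (Fin d → ℝ), ∀ i, B i = rv (b i) := by
  classical
  set M0 : Matrix (Fin d) (Fin d) ℤ := Matrix.of (fun i j => b i j) with hM0
  have h1 : IsUnit ((Pi.basisFun ℤ (Fin d)).det ⇑b) := (Pi.basisFun ℤ (Fin d)).isUnit_det b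
  have h2 : (Pi.basisFun ℤ (Fin d)).det ⇑b = M0ᵀ.det := by
    rw [Basis.det_apply]
    congr 1
  have h3 : IsUnit M0.det := by
    rw [← Matrix.det_transpose]; rw [h2] at h1; exact h1
  set A : Matrix (Fin d) (Fin d) ℝ := M0.map (Int.castRingHom ℝ) with hA
  have h4 : IsUnit Aᵀ.det := by
    rw [Matrix.det_transpose, hA, ← RingHom.mapMatrix_apply, ← RingHom.map_det]
    exact h3.map (Int.castRingHom ℝ).toMonoidHom
  let L := Matrix.toLinearEquiv (Pi.basisFun ℝ (Fin d)) Aᵀ h4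
  refine ⟨(Pi.basisFun ℝ (Fin d)).map L, fun i => ?_⟩
  funext j
  simp only [Basis.map_apply, L, Matrix.toLinearEquiv_apply]
  rw [Matrix.toLin_eq_toLin']
  simp [Matrix.toLin'_apply, Matrix.mulVec_single, rv, hA, hM0, Matrix.transpose_apply]


lemma repr_comb (B : Basis (Fin d) ℝ (Fin d → ℝ)) {ι : Type*} [Fintype ι]
    (jf : ι → Fin d) (hj : Function.Injective jf) (c : ι → ℝ) (i0 : ι) :
    B.repr (∑ i, c i • B (jf i)) (jf i0) = c i0 := by
  classical
  rw [map_sum]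
  rw [Finsupp.finset_sum_apply]
  rw [Finset.sum_eq_single i0]
  · simp
  · intro i _ hi
    simp only [_root_.map_smul, Finsupp.smul_apply, Basis.repr_self]
    rw [Finsupp.single_eq_of_ne (fun h => hi (hj h).symm)]
    simp
  · simp

lemma repr_comb_ne (B : Basis (Fin d) ℝ (Fin d → ℝ)) {ι : Type*} [Fintype ι]
    (jf : ι → Fin d) (c : ι → ℝ) (k : Fin d) (hk : ∀ i, jf i ≠ k) :
    B.repr (∑ i, c i • B (jf i)) k = 0 := by
  classical
  rw [map_sum, Finsupp.finset_sum_apply]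
  apply Finset.sum_eq_zero
  intro i _
  simp only [_root_.map_smul, Finsupp.smul_apply, Basis.repr_self]
  rw [Finsupp.single_eq_of_ne (hk i).symm]
  simp

lemma mem_coneOf_iff (s : Finset (Fin d → ℤ)) (x : Fin d → ℝ) :
    x ∈ coneOf s ↔ ∃ c : {y // y ∈ s} → ℝ, (∀ e, 0 ≤ c e) ∧ x = ∑ e, c e • rv ↑e := by
  classical
  constructor
  · rintro ⟨c, hc, rfl⟩
    exact ⟨fun e => c ↑e, fun e => hc _, (Finset.sum_attach s (fun e => c e • rv e)).symm⟩
  · rintro ⟨c, hc, rfl⟩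
    refine ⟨fun n => if h : n ∈ s then c ⟨n, h⟩ else 0, ?_, ?_⟩
    · intro e; by_cases h : e ∈ s <;> simp [h, hc]
    · show ∑ e : {y // y ∈ s}, c e • rv ↑e =
        ∑ e ∈ s, (if h : e ∈ s then c ⟨e, h⟩ else 0) • rv e
      rw [← Finset.sum_attach s
        (fun e => (if h : e ∈ s then c ⟨e, h⟩ else 0) • rv e)]
      apply Finset.sum_congr rfl
      intro e _
      rw [dif_pos e.2]

lemma zero_mem_coneOf (s : Finset (Fin d → ℤ)) : (0 : Fin d → ℝ) ∈ coneOf s :=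
  ⟨0, fun _ => le_refl 0, by simp⟩

lemma gen_mem_coneOf (s : Finset (Fin d → ℤ)) (e : {y // y ∈ s}) : rv ↑e ∈ coneOf s := by
  classical
  refine (mem_coneOf_iff s _).2 ⟨fun e' => if e' = e then 1 else 0, ?_, ?_⟩
  · intro e'; dsimp only; split <;> norm_num
  · dsimp only; simp [ite_smul]

lemma cone_key (s : Finset (Fin d → ℤ)) (b : Basis (Fin d) ℤ (Fin d → ℤ))
    (hb : (s : Set (Fin d → ℤ)) ⊆ Set.range b) :
    (∀ c c' : {x // x ∈ s} → ℝ,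
        ∑ e, c e • rv (↑e : Fin d → ℤ) = ∑ e, c' e • rv ↑e → c = c') ∧
    (∀ n : Fin d → ℤ, rv n ∈ intrinsicInterior ℝ (coneOf s) ↔
        ∃ m : {x // x ∈ s} → ℕ, n = ∑ e, (m e + 1) • (↑e : Fin d → ℤ)) := by
  classical
  obtain ⟨B, hB⟩ := exists_realBasis b
  have hidx0 : ∀ e : {x // x ∈ s}, ∃ i, b i = ↑e := fun e => hb e.2
  choose idx hidxs using hidx0
  have hinj : Function.Injective idx := by
    intro e e' h
    apply Subtype.ext
    rw [← hidxs e, ← hidxs e', h]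
  have hBe : ∀ e : {x // x ∈ s}, B (idx e) = rv ↑e := fun e => by rw [hB, hidxs]
  have hre : ∀ (c : {x // x ∈ s} → ℝ) (e0 : {x // x ∈ s}),
      B.repr (∑ e, c e • rv (↑e : Fin d → ℤ)) (idx e0) = c e0 := by
    intro c e0
    have h : ∑ e, c e • rv (↑e : Fin d → ℤ) = ∑ e, c e • B (idx e) := by
      simp [hBe]
    rw [h]
    exact repr_comb B idx hinj c e0
  have hrn : ∀ (c : {x // x ∈ s} → ℝ) (k : Fin d), (∀ e, idx e ≠ k) →
      B.repr (∑ e, c e • rv (↑e : Fin d → ℤ)) k = 0 := by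
    intro c k hk
    have h : ∑ e, c e • rv (↑e : Fin d → ℤ) = ∑ e, c e • B (idx e) := by simp [hBe]
    rw [h]
    exact repr_comb_ne B idx c k hk
  have uniq : ∀ c c' : {x // x ∈ s} → ℝ,
      ∑ e, c e • rv (↑e : Fin d → ℤ) = ∑ e, c' e • rv ↑e → c = c' := by
    intro c c' h
    funext e0
    rw [← hre c e0, h, hre c' e0]
  set V : Submodule ℝ (Fin d → ℝ) :=
    Submodule.span ℝ (Set.range fun e : {x // x ∈ s} => rv ↑e) with hV
  have hconeV : coneOf s ⊆ (V : Set (Fin d → ℝ)) := by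
    intro x hx
    obtain ⟨c, _, rfl⟩ := (mem_coneOf_iff s x).1 hx
    exact Submodule.sum_mem _ fun e _ =>
      Submodule.smul_mem _ _ (Submodule.subset_span ⟨e, rfl⟩)
  have haff : ∀ y : Fin d → ℝ, y ∈ affineSpan ℝ (coneOf s) → y ∈ V := by
    intro y hy
    have h : affineSpan ℝ (coneOf s) ≤ V.toAffineSubspace := by
      rw [affineSpan_le]
      exact hconeV
    exact h hy
  have hdecomp : ∀ y : Fin d → ℝ, y ∈ V →
      y = ∑ e, (B.repr y (idx e)) • rv (↑e : Fin d → ℤ) := by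
    intro y hy
    obtain ⟨a, ha⟩ := (Submodule.mem_span_range_iff_exists_fun ℝ).1 hy
    rw [← ha]
    exact (Finset.sum_congr rfl (fun e _ => by rw [hre a e])).symm
  have claimA : ∀ c : {x // x ∈ s} → ℝ, (∀ e, 0 < c e) →
      (∑ e, c e • rv (↑e : Fin d → ℤ)) ∈ intrinsicInterior ℝ (coneOf s) := by
    intro c hc
    have hxcone : (∑ e, c e • rv (↑e : Fin d → ℤ)) ∈ coneOf s :=
      (mem_coneOf_iff s _).2 ⟨c, fun e => (hc e).le, rfl⟩
    have hxspan := subset_affineSpan ℝ (coneOf s) hxcone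
    rw [mem_intrinsicInterior]
    refine ⟨⟨_, hxspan⟩, ?_, rfl⟩
    set U : Set (Fin d → ℝ) := {y | ∀ e : {x // x ∈ s}, 0 < B.repr y (idx e)} with hU
    have hUopen : IsOpen U := by
      have h : U = ⋂ e : {x // x ∈ s}, (B.coord (idx e)) ⁻¹' Set.Ioi 0 := by
        ext y
        simp [hU, Basis.coord_apply]
      rw [h]
      exact isOpen_iInter_of_finite fun e =>
        isOpen_Ioi.preimage (B.coord (idx e)).continuous_of_finiteDimensional
    apply mem_interior.2
    refine ⟨Subtype.val ⁻¹' U, ?_, hUopen.preimage continuous_subtype_val, ?_⟩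
    · rintro ⟨y, hy⟩ hmem
      simp only [Set.mem_preimage] at hmem ⊢
      have hyV : y ∈ V := haff y hy
      exact (mem_coneOf_iff s y).2
        ⟨fun e => B.repr y (idx e), fun e => (hmem e).le, hdecomp y hyV⟩
    · simp only [Set.mem_preimage]
      intro e
      show 0 < B.repr (∑ e, c e • rv (↑e : Fin d → ℤ)) (idx e)
      rw [hre c e]
      exact hc e
  have claimB : ∀ x, x ∈ intrinsicInterior ℝ (coneOf s) →
      ∃ c : {x // x ∈ s} → ℝ, (∀ e, 0 < c e) ∧ x = ∑ e, c e • rv ↑e := by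
    intro x hx
    obtain ⟨c, hc0, hxeq⟩ := (mem_coneOf_iff s x).1 (intrinsicInterior_subset hx)
    refine ⟨c, fun e0 => ?_, hxeq⟩
    rcases (hc0 e0).lt_or_eq with h | h
    · exact h
    exfalso
    obtain ⟨⟨y, hy⟩, hyint, hyx⟩ := mem_intrinsicInterior.1 hx
    rw [mem_interior_iff_mem_nhds, Metric.mem_nhds_iff] at hyint
    obtain ⟨ε, hε, hball⟩ := hyint
    have hnn : (0:ℝ) < ‖rv (↑e0 : Fin d → ℤ)‖ + 1 := by positivity
    set t : ℝ := ε / (2 * (‖rv (↑e0 : Fin d → ℤ)‖ + 1)) with ht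
    have ht0 : 0 < t := by positivity
    set z : Fin d → ℝ := x - t • rv ↑e0 with hz
    have hdir : rv (↑e0 : Fin d → ℤ) ∈ (affineSpan ℝ (coneOf s)).direction := by
      rw [direction_affineSpan]
      have h0 := vsub_mem_vectorSpan ℝ (gen_mem_coneOf s e0) (zero_mem_coneOf s)
      simpa using h0
    have hxspan : x ∈ affineSpan ℝ (coneOf s) := by
      rw [← hyx]; exact hy
    have hzspan : z ∈ affineSpan ℝ (coneOf s) := by
      have h1 := AffineSubspace.vadd_mem_of_mem_direction
        (Submodule.smul_mem _ (-t) hdir) hxspan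
      simpa [hz, sub_eq_add_neg, neg_smul, add_comm] using h1
    have hdist : (⟨z, hzspan⟩ : affineSpan ℝ (coneOf s)) ∈
        Metric.ball (⟨y, hy⟩ : affineSpan ℝ (coneOf s)) ε := by
      rw [Metric.mem_ball, Subtype.dist_eq]
      have hyx' : y = x := hyx
      show dist z y < ε
      rw [hyx', dist_eq_norm]
      have h1 : z - x = -(t • rv (↑e0 : Fin d → ℤ)) := by
        rw [hz, sub_sub_cancel_left]
      rw [h1, norm_neg, norm_smul, Real.norm_eq_abs, abs_of_pos ht0]
      have h2 : t * (‖rv (↑e0 : Fin d → ℤ)‖ + 1) = ε / 2 := by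
        rw [ht]; field_simp
      nlinarith [norm_nonneg (rv (↑e0 : Fin d → ℤ))]
    have hzc : z ∈ coneOf s := hball hdist
    obtain ⟨cz, hcz0, hzeq⟩ := (mem_coneOf_iff s z).1 hzc
    have h1 : B.repr z (idx e0) = cz e0 := by rw [hzeq]; exact hre cz e0
    have h2 : B.repr z (idx e0) = c e0 - t := by
      rw [hz, map_sub, _root_.map_smul, Finsupp.sub_apply, Finsupp.smul_apply]
      rw [hxeq, hre c e0]
      have h3 : B.repr (rv (↑e0 : Fin d → ℤ)) (idx e0) = 1 := by
        rw [← hBe e0, B.repr_self]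
        simp
      rw [h3]
      simp
    rw [h1] at h2
    have h4 := hcz0 e0
    rw [h2, ← h] at h4
    linarith
  refine ⟨uniq, fun n => ?_⟩
  constructor
  · intro hx
    obtain ⟨c, hc, hrv⟩ := claimB _ hx
    have hreprn : ∀ i, B.repr (rv n) i = ((b.repr n i : ℤ) : ℝ) := by
      intro i
      have hn : rv n = ∑ i', ((b.repr n i' : ℤ) : ℝ) • B i' := by
        conv_lhs => rw [← b.sum_repr n]
        rw [rv_sum]
        exact Finset.sum_congr rfl fun i' _ => by rw [rv_zsmul, hB]
      rw [hn]
      exact repr_comb B id Function.injective_id _ i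
    have hki : ∀ e0, ((b.repr n (idx e0) : ℤ) : ℝ) = c e0 := by
      intro e0
      have h1 := hre c e0
      rw [← hrv] at h1
      rw [← h1, hreprn]
    have hk0 : ∀ i, (∀ e, idx e ≠ i) → b.repr n i = 0 := by
      intro i hi
      have h1 := hrn c i hi
      rw [← hrv] at h1
      rw [hreprn i] at h1
      exact_mod_cast h1
    have hkpos : ∀ e0, 0 < b.repr n (idx e0) := by
      intro e0
      have h2 : (0:ℝ) < ((b.repr n (idx e0) : ℤ) : ℝ) := by
        rw [hki]; exact hc e0
      exact_mod_cast h2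
    have hnsum : n = ∑ e : {x // x ∈ s}, (b.repr n (idx e)) • (↑e : Fin d → ℤ) := by
      conv_lhs => rw [← b.sum_repr n]
      have hsub : ∑ i : Fin d, b.repr n i • b i
          = ∑ i ∈ Finset.univ.image idx, b.repr n i • b i := by
        symm
        apply Finset.sum_subset (Finset.subset_univ _)
        intro i _ hi
        have h5 : ∀ e, idx e ≠ i := by
          intro e he
          exact hi (Finset.mem_image.2 ⟨e, Finset.mem_univ e, he⟩)
        rw [hk0 i h5, zero_smul]
      rw [hsub, Finset.sum_image fun e _ e' _ h => hinj h]
      exact Finset.sum_congr rfl fun e _ => by rw [hidxs]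
    refine ⟨fun e => (b.repr n (idx e)).toNat - 1, ?_⟩
    conv_lhs => rw [hnsum]
    apply Finset.sum_congr rfl
    intro e _
    have h3 : ((b.repr n (idx e)).toNat - 1 + 1 : ℕ) = (b.repr n (idx e)).toNat := by
      have h6 := hkpos e; omega
    rw [h3]
    conv_lhs => rw [← Int.toNat_of_nonneg (hkpos e).le]
    rw [natCast_zsmul]
  · rintro ⟨m, rfl⟩
    have h : rv (∑ e : {x // x ∈ s}, (m e + 1) • (↑e : Fin d → ℤ))
        = ∑ e, ((m e : ℝ) + 1) • rv ↑e := by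
      rw [rv_sum]
      refine Finset.sum_congr rfl fun e _ => ?_
      rw [rv_nsmul]
      congr 1
      push_cast
      ring
    rw [h]
    exact claimA _ (fun e => by positivity)

lemma rv_comb {d : ℕ} (s : Finset (Fin d → ℤ)) (m : {x // x ∈ s} → ℕ) :
    rv (∑ e : {x // x ∈ s}, (m e + 1) • (↑e : Fin d → ℤ))
      = ∑ e : {x // x ∈ s}, ((m e : ℝ) + 1) • rv ↑e := by
  rw [rv_sum]
  refine Finset.sum_congr rfl fun e _ => ?_
  rw [rv_nsmul]
  congr 1
  push_cast
  ring


lemma hasSum_pi_fin : ∀ (n : ℕ) (g : Fin n → ℕ → ℂ) (S : Fin n → ℂ),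
    (∀ i, Summable fun k => ‖g i k‖) → (∀ i, HasSum (g i) (S i)) →
    HasSum (fun m : Fin n → ℕ => ∏ i, g i (m i)) (∏ i, S i) ∧
      Summable (fun m : Fin n → ℕ => ‖∏ i, g i (m i)‖) := by
  intro n
  induction n with
  | zero =>
    intro g S _ _
    constructor
    · have h : HasSum (fun m : Fin 0 → ℕ => ∏ i, g i (m i)) ((fun m : Fin 0 → ℕ => ∏ i, g i (m i)) default) := by
        apply hasSum_single (default : Fin 0 → ℕ)
        intro b hb
        exact absurd (Subsingleton.elim b default) hb
      simpa using h
    · have : Finite (Fin 0 → ℕ) := inferInstance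
      exact .of_finite
  | succ n ih =>
    intro g S hns hhs
    obtain ⟨ihn1, ihn2⟩ := ih (fun i => g i.succ) (fun i => S i.succ)
      (fun i => hns i.succ) (fun i => hhs i.succ)
    have hsumm : Summable fun p : ℕ × (Fin n → ℕ) =>
        g 0 p.1 * ∏ i : Fin n, g i.succ (p.2 i) := by
      have h := summable_mul_of_summable_norm (hns 0) ihn2
      exact h
    have hprod : HasSum (fun p : ℕ × (Fin n → ℕ) => g 0 p.1 * ∏ i : Fin n, g i.succ (p.2 i))
        (S 0 * ∏ i : Fin n, S i.succ) := by
      have h := HasSum.mul (hhs 0) ihn1 hsumm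
      exact h
    have hnorm : Summable (fun p : ℕ × (Fin n → ℕ) => ‖g 0 p.1 * ∏ i : Fin n, g i.succ (p.2 i)‖) := by
      have h := Summable.mul_norm (hns 0) ihn2
      exact h
    set e : (Fin (n+1) → ℕ) ≃ ℕ × (Fin n → ℕ) := (Fin.consEquiv fun _ => ℕ).symm with he
    have hfact : ∀ m : Fin (n+1) → ℕ,
        ∏ i, g i (m i) = g 0 (m 0) * ∏ i : Fin n, g i.succ (m i.succ) :=
      fun m => Fin.prod_univ_succ _
    constructor
    · have h1 : HasSum ((fun p : ℕ × (Fin n → ℕ) => g 0 p.1 * ∏ i : Fin n, g i.succ (p.2 i)) ∘ e)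
          (S 0 * ∏ i : Fin n, S i.succ) := (e.hasSum_iff).2 hprod
      have h2 : ((fun p : ℕ × (Fin n → ℕ) => g 0 p.1 * ∏ i : Fin n, g i.succ (p.2 i)) ∘ e)
          = fun m : Fin (n+1) → ℕ => ∏ i, g i (m i) := by
        funext m
        have hem : e m = (m 0, fun i => m i.succ) := rfl
        rw [Function.comp_apply, hem, hfact m]
      rw [h2] at h1
      rw [Fin.prod_univ_succ]
      exact h1
    · have h1 : Summable ((fun p : ℕ × (Fin n → ℕ) => ‖g 0 p.1 * ∏ i : Fin n, g i.succ (p.2 i)‖) ∘ e) :=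
        (e.summable_iff).2 hnorm
      have h2 : ((fun p : ℕ × (Fin n → ℕ) => ‖g 0 p.1 * ∏ i : Fin n, g i.succ (p.2 i)‖) ∘ e)
          = fun m : Fin (n+1) → ℕ => ‖∏ i, g i (m i)‖ := by
        funext m
        have hem : e m = (m 0, fun i => m i.succ) := rfl
        rw [Function.comp_apply, hem, hfact m]
      rw [h2] at h1
      exact h1

lemma hasSum_pi_fintype {ι : Type*} [Fintype ι] (g : ι → ℕ → ℂ) (S : ι → ℂ)
    (h1 : ∀ i, Summable fun k => ‖g i k‖) (h2 : ∀ i, HasSum (g i) (S i)) :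
    HasSum (fun m : ι → ℕ => ∏ i, g i (m i)) (∏ i, S i) ∧
      Summable (fun m : ι → ℕ => ‖∏ i, g i (m i)‖) := by
  classical
  set e : ι ≃ Fin (Fintype.card ι) := Fintype.equivFin ι with he
  obtain ⟨hfs, hfn⟩ := hasSum_pi_fin (Fintype.card ι) (fun i => g (e.symm i)) (fun i => S (e.symm i))
    (fun i => h1 _) (fun i => h2 _)
  set E : (ι → ℕ) ≃ (Fin (Fintype.card ι) → ℕ) := Equiv.arrowCongr e (Equiv.refl ℕ) with hE
  have hcomp : ((fun m' : Fin (Fintype.card ι) → ℕ => ∏ i, g (e.symm i) (m' i)) ∘ E)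
      = fun m : ι → ℕ => ∏ i, g i (m i) := by
    funext m
    rw [Function.comp_apply]
    have hEm : ∀ i', (E m) i' = m (e.symm i') := fun i' => by
      simp [hE, Equiv.arrowCongr]
    calc ∏ i', g (e.symm i') ((E m) i')
        = ∏ i', g (e.symm i') (m (e.symm i')) := by
          exact Finset.prod_congr rfl fun i' _ => by rw [hEm]
      _ = ∏ i, g i (m i) := Equiv.prod_comp e.symm (fun i => g i (m i))
  have hS : ∏ i, S (e.symm i) = ∏ i, S i := Equiv.prod_comp e.symm S
  constructor
  · have := (E.hasSum_iff).2 hfs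
    rw [hcomp] at this
    rwa [hS] at this
  · have := (E.summable_iff).2 hfn
    have hcomp2 : ((fun m' : Fin (Fintype.card ι) → ℕ => ‖∏ i, g (e.symm i) (m' i)‖) ∘ E)
        = fun m : ι → ℕ => ‖∏ i, g i (m i)‖ := by
      funext m
      rw [Function.comp_apply]
      have := congrFun hcomp m
      rw [Function.comp_apply] at this
      rw [this]
    rwa [hcomp2] at this



lemma addChar_sum {A : Type*} [AddCommMonoid A] (χ : AddChar A ℂ) {ι : Type*}
    (t : Finset ι) (g : ι → A) :
    χ (∑ i ∈ t, g i) = ∏ i ∈ t, χ (g i) := by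
  classical
  induction t using Finset.cons_induction with
  | empty => simp
  | cons a t ha ih =>
    rw [Finset.sum_cons, Finset.prod_cons, AddChar.map_add_eq_mul, ih]

lemma geom_aux (w : ℂ) (hw : ‖w‖ < 1) :
    HasSum (fun k : ℕ => w ^ (k + 1)) (w / (1 - w)) ∧
      Summable (fun k : ℕ => ‖w ^ (k + 1)‖) := by
  constructor
  · have h := (hasSum_geometric_of_norm_lt_one hw).mul_left w
    have h2 : (fun k : ℕ => w * w ^ k) = fun k : ℕ => w ^ (k + 1) := by
      funext k
      rw [pow_succ, mul_comm]
    rw [h2] at h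
    rwa [div_eq_mul_inv]
  · have h := (summable_geometric_of_lt_one (norm_nonneg w) hw).mul_left ‖w‖
    have h2 : (fun k : ℕ => ‖w‖ * ‖w‖ ^ k) = fun k : ℕ => ‖w ^ (k + 1)‖ := by
      funext k
      rw [norm_pow, pow_succ, mul_comm]
    rwa [h2] at h


end Stmt7Aux

/-- A complete regular fan in `ℝ^d`, encoded by the finite sets of primitive generators of
its cones: each generating set extends to a `ℤ`-basis of the lattice (regularity), the
collection is closed under passing to subsets (faces), and the relative interiors of the
cones partition the space (in particular the fan is complete). -/
structure IsCompleteRegularFanGens {d : ℕ} (F : Finset (Finset (Fin d → ℤ))) : Prop where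
  regular : ∀ s ∈ F, ∃ b : Module.Basis (Fin d) ℤ (Fin d → ℤ), (s : Set (Fin d → ℤ)) ⊆ Set.range b
  downward : ∀ s ∈ F, ∀ t ⊆ s, t ∈ F
  partition : ∀ x : Fin d → ℝ, ∃! s, s ∈ F ∧ x ∈ intrinsicInterior ℝ (coneOf s)

/-- `φ` is piecewise linear with respect to the fan: on each cone it agrees with an
`ℝ`-linear function (with values in `ℂ`). -/
def IsPL {d : ℕ} (F : Finset (Finset (Fin d → ℤ))) (φ : (Fin d → ℝ) → ℂ) : Prop :=
  ∀ s ∈ F, ∃ l : (Fin d → ℝ) →ₗ[ℝ] ℂ, ∀ x ∈ coneOf s, φ x = l x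

open Stmt7Aux in
/-- for a complete regular fan `Σ`, a piecewise linear `φ` with
`Re φ(e) > 0` on all primitive generators, `q > 1`, and a unitary character `χ` of the
lattice, the sum `∑_{n ∈ N} q^{-φ(n)} χ(n)` converges absolutely with value
`∑_{σ ∈ Σ} ∏_{e ∈ σ ∩ Σ₁} χ(e) q^{-φ(e)} / (1 - χ(e) q^{-φ(e)})`. -/
theorem stmt7 {d : ℕ} (F : Finset (Finset (Fin d → ℤ)))
    (hF : IsCompleteRegularFanGens F)
    (φ : (Fin d → ℝ) → ℂ) (hφ : IsPL F φ)
    (hpos : ∀ s ∈ F, ∀ e ∈ s, 0 < (φ (fun j => (e j : ℝ))).re)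
    (q : ℝ) (hq : 1 < q)
    (χ : AddChar (Fin d → ℤ) ℂ) (hχ : ∀ n, ‖χ n‖ = 1) :
    Summable (fun n : Fin d → ℤ =>
      ‖Complex.exp (-(φ (fun j => (n j : ℝ))) * Real.log q) * χ n‖) ∧
    HasSum (fun n : Fin d → ℤ =>
        Complex.exp (-(φ (fun j => (n j : ℝ))) * Real.log q) * χ n)
      (∑ s ∈ F, ∏ e ∈ s,
        (χ e * Complex.exp (-(φ (fun j => (e j : ℝ))) * Real.log q)) /
          (1 - χ e * Complex.exp (-(φ (fun j => (e j : ℝ))) * Real.log q))) := by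

  classical
  set f : (Fin d → ℤ) → ℂ :=
    fun n => Complex.exp (-(φ (fun j => (n j : ℝ))) * Real.log q) * χ n with hf
  have hfrv : ∀ n, f n = Complex.exp (-(φ (rv n)) * Real.log q) * χ n := fun n => rfl
  have hkey := fun s : {s // s ∈ F} =>
    cone_key s.1 (hF.regular s.1 s.2).choose (hF.regular s.1 s.2).choose_spec
  set w : (s : {s // s ∈ F}) → {x // x ∈ s.1} → ℂ :=
    fun s e => χ ↑e * Complex.exp (-(φ (rv ↑e)) * Real.log q) with hw
  have hwlt : ∀ (s : {s // s ∈ F}) (e : {x // x ∈ s.1}), ‖w s e‖ < 1 := by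
    intro s e
    have h0 : w s e = χ ↑e * Complex.exp (-(φ (rv ↑e)) * Real.log q) := rfl
    rw [h0, norm_mul]
    have h1 : ‖χ (↑e : Fin d → ℤ)‖ = 1 := by rw [hχ]
    rw [h1, one_mul, Complex.norm_exp]
    rw [Real.exp_lt_one_iff]
    have h2 : (-(φ (rv (↑e : Fin d → ℤ))) * (Real.log q : ℂ)).re
        = -(φ (rv (↑e : Fin d → ℤ))).re * Real.log q := by
      simp [Complex.mul_re]
    rw [h2]
    have h3 : 0 < (φ (rv (↑e : Fin d → ℤ))).re := hpos s.1 s.2 ↑e e.2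
    have h4 : 0 < Real.log q := Real.log_pos hq
    nlinarith
  set Φ : ((s : {s // s ∈ F}) × ({x // x ∈ s.1} → ℕ)) → (Fin d → ℤ) :=
    fun t => ∑ e : {x // x ∈ t.1.1}, (t.2 e + 1) • (↑e : Fin d → ℤ) with hΦ
  have hmemint : ∀ t, rv (Φ t) ∈ intrinsicInterior ℝ (coneOf t.1.1) := by
    intro t
    exact ((hkey t.1).2 (Φ t)).2 ⟨t.2, rfl⟩
  have hinj : Function.Injective Φ := by
    rintro ⟨⟨s, hs⟩, m⟩ ⟨⟨s', hs'⟩, m'⟩ h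
    have h1 := hmemint ⟨⟨s, hs⟩, m⟩
    have h2 := hmemint ⟨⟨s', hs'⟩, m'⟩
    rw [h] at h1
    obtain ⟨u, hu, huniq⟩ := hF.partition (rv (Φ ⟨⟨s', hs'⟩, m'⟩))
    have hss : s = s' := by
      have e1 := huniq s ⟨hs, h1⟩
      have e2 := huniq s' ⟨hs', h2⟩
      rw [e1, e2]
    subst hss
    have hm : m = m' := by
      have h3 := congrArg rv h
      have h3l : rv (Φ ⟨⟨s, hs⟩, m⟩)
          = ∑ e : {x // x ∈ s}, ((m e : ℝ) + 1) • rv ↑e := rv_comb s m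
      have h3r : rv (Φ ⟨⟨s, hs'⟩, m'⟩)
          = ∑ e : {x // x ∈ s}, ((m' e : ℝ) + 1) • rv ↑e := rv_comb s m'
      rw [h3l, h3r] at h3
      have h4 := (hkey ⟨s, hs⟩).1 _ _ h3
      funext e
      have h5 := congrFun h4 e
      simp only [add_left_inj] at h5
      exact_mod_cast h5
    subst hm
    rfl
  have hsurj : Function.Surjective Φ := by
    intro n
    obtain ⟨s, ⟨hsF, hmem⟩, _⟩ := hF.partition (rv n)
    obtain ⟨m, hm⟩ := ((hkey ⟨s, hsF⟩).2 n).1 hmem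
    exact ⟨⟨⟨s, hsF⟩, m⟩, hm.symm⟩
  set E := Equiv.ofBijective Φ ⟨hinj, hsurj⟩ with hE
  have hfib : ∀ (s : {s // s ∈ F}) (m : {x // x ∈ s.1} → ℕ),
      f (Φ ⟨s, m⟩) = ∏ e : {x // x ∈ s.1}, (w s e) ^ (m e + 1) := by
    intro s m
    obtain ⟨l, hl⟩ := hφ s.1 s.2
    have hx : rv (Φ ⟨s, m⟩) = ∑ e : {x // x ∈ s.1}, ((m e : ℝ) + 1) • rv ↑e :=
      rv_comb s.1 m
    have hmemc : rv (Φ ⟨s, m⟩) ∈ coneOf s.1 :=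
      (mem_coneOf_iff s.1 _).2 ⟨fun e => (m e : ℝ) + 1, fun e => by positivity, hx⟩
    have hφx : φ (rv (Φ ⟨s, m⟩))
        = ∑ e : {x // x ∈ s.1}, ((m e : ℝ) + 1) • φ (rv ↑e) := by
      rw [hl _ hmemc, hx, map_sum]
      refine Finset.sum_congr rfl fun e _ => ?_
      rw [_root_.map_smul, hl _ (gen_mem_coneOf s.1 e)]
    have harg : -(φ (rv (Φ ⟨s, m⟩))) * (Real.log q : ℂ)
        = ∑ e : {x // x ∈ s.1}, ((m e + 1 : ℕ) : ℂ) * (-(φ (rv ↑e)) * (Real.log q : ℂ)) := by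
      rw [hφx, ← Finset.sum_neg_distrib, Finset.sum_mul]
      refine Finset.sum_congr rfl fun e _ => ?_
      rw [Complex.real_smul]
      push_cast
      ring
    have hexp : Complex.exp (-(φ (rv (Φ ⟨s, m⟩))) * Real.log q)
        = ∏ e : {x // x ∈ s.1}, Complex.exp (-(φ (rv ↑e)) * Real.log q) ^ (m e + 1) := by
      rw [harg, Complex.exp_sum]
      refine Finset.prod_congr rfl fun e _ => ?_
      rw [Complex.exp_nat_mul]
    have hχΦ : χ (Φ ⟨s, m⟩) = ∏ e : {x // x ∈ s.1}, (χ ↑e) ^ (m e + 1) := by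
      have h0 : χ (Φ ⟨s, m⟩)
          = χ (∑ e : {x // x ∈ s.1}, (m e + 1) • (↑e : Fin d → ℤ)) := rfl
      rw [h0, addChar_sum]
      refine Finset.prod_congr rfl fun e _ => ?_
      rw [AddChar.map_nsmul_eq_pow]
    rw [hfrv, hexp, hχΦ, ← Finset.prod_mul_distrib]
    refine Finset.prod_congr rfl fun e _ => ?_
    have h0 : w s e = χ ↑e * Complex.exp (-(φ (rv ↑e)) * Real.log q) := rfl
    rw [h0, mul_pow]
    ring
  have hfibsum := fun s : {s // s ∈ F} =>
    hasSum_pi_fintype (fun e k => (w s e) ^ (k + 1))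
      (fun e => w s e / (1 - w s e))
      (fun e => (geom_aux _ (hwlt s e)).2) (fun e => (geom_aux _ (hwlt s e)).1)
  have hfnorm : Summable
      (fun t : (s : {s // s ∈ F}) × ({x // x ∈ s.1} → ℕ) => ‖f (Φ t)‖) := by
    apply (summable_sigma_of_nonneg (fun t => norm_nonneg _)).2
    constructor
    · intro s
      have h1 := (hfibsum s).2
      have h2 : (fun m : {x // x ∈ s.1} → ℕ => ‖∏ e, (w s e) ^ (m e + 1)‖)
          = fun m => ‖f (Φ ⟨s, m⟩)‖ := by
        funext m
        rw [hfib]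
      rwa [h2] at h1
    · exact Summable.of_finite
  have hfnormZ : Summable fun n => ‖f n‖ := by
    apply (E.summable_iff (f := fun n => ‖f n‖)).1
    exact hfnorm
  have hsummf : Summable f := hfnormZ.of_norm
  have hsum : HasSum f (∑' n, f n) := hsummf.hasSum
  have htrans : HasSum (fun t => f (Φ t)) (∑' n, f n) :=
    (E.hasSum_iff (f := f) (a := ∑' n, f n)).2 hsum
  have hsigma : HasSum
      (fun s : {s // s ∈ F} => ∏ e : {x // x ∈ s.1}, w s e / (1 - w s e))
      (∑' n, f n) := by
    apply htrans.sigma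
    intro s
    have h1 := (hfibsum s).1
    have h2 : (fun m : {x // x ∈ s.1} → ℕ => ∏ e, (w s e) ^ (m e + 1))
        = fun m => f (Φ ⟨s, m⟩) := by
      funext m
      rw [hfib]
    rwa [h2] at h1
  have hfin := hasSum_fintype
    (fun s : {s // s ∈ F} => ∏ e : {x // x ∈ s.1}, w s e / (1 - w s e))
  have hval : ∑' n, f n
      = ∑ s : {s // s ∈ F}, ∏ e : {x // x ∈ s.1}, w s e / (1 - w s e) :=
    hsigma.unique hfin
  have hRHS : (∑ s ∈ F, ∏ e ∈ s,
        (χ e * Complex.exp (-(φ (fun j => (e j : ℝ))) * Real.log q)) /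
          (1 - χ e * Complex.exp (-(φ (fun j => (e j : ℝ))) * Real.log q)))
      = ∑ s : {s // s ∈ F}, ∏ e : {x // x ∈ s.1}, w s e / (1 - w s e) := by
    rw [← Finset.sum_attach F (fun s => ∏ e ∈ s,
        (χ e * Complex.exp (-(φ (fun j => (e j : ℝ))) * Real.log q)) /
          (1 - χ e * Complex.exp (-(φ (fun j => (e j : ℝ))) * Real.log q)))]
    rw [← Finset.univ_eq_attach]
    refine Finset.sum_congr rfl fun s _ => ?_
    rw [← Finset.prod_attach s.1 (fun e =>
        (χ e * Complex.exp (-(φ (fun j => (e j : ℝ))) * Real.log q)) /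
          (1 - χ e * Complex.exp (-(φ (fun j => (e j : ℝ))) * Real.log q)))]
    rw [← Finset.univ_eq_attach]
    rfl
  refine ⟨hfnormZ, ?_⟩
  rw [hRHS, ← hval]
  exact hsum
end

section
/- Let Σ be a complete regular fan in a d-dimensional real vector space N_ℝ with one-dimensional generators Σ₁, let φ : N_ℝ → ℂ be Σ-piecewise linear with Re(φ(e)) > 0 for all e ∈ Σ₁, and let m ∈ M_ℝ = N_ℝ∨. Then ∫_{N_ℝ} e^{−φ(n) − i n(m)} dn = ∑_{σ ∈ Σ, dim σ = d} ∏_{e ∈ σ ∩ Σ₁} 1/(φ(e) + i e(m)), where dn is the Lebesgue measure normalized by the lattice N. -/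
open MeasureTheory Set

lemma lemA {a : ℂ} (ha : 0 < a.re) :
    IntegrableOn (fun t : ℝ => Complex.exp (-(a * t))) (Ici 0) ∧
    ∫ t in Ici (0:ℝ), Complex.exp (-(a * t)) = a⁻¹ := by
  have hcont : Continuous (fun t : ℝ => Complex.exp (-(a * t))) := by
    continuity
  have hint : IntegrableOn (fun t : ℝ => Complex.exp (-(a * t))) (Ioi 0) := by
    refine Integrable.mono' (g := fun t => Real.exp (-a.re * t))
      (exp_neg_integrableOn_Ioi 0 ha) hcont.aestronglyMeasurable.restrict ?_
    filter_upwards with t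
    rw [Complex.norm_exp]
    simp [neg_mul]
  have hderiv : ∀ t ∈ Ioi (0:ℝ), HasDerivAt (fun t : ℝ => -a⁻¹ * Complex.exp (-(a * t)))
      (Complex.exp (-(a * t))) t := by
    intro t _
    have h1 : HasDerivAt (fun t : ℝ => -(a * t)) (-a) t := by
      simpa using ((Complex.ofRealCLM.hasDerivAt (x := t)).const_mul a).fun_neg
    have := (h1.cexp).const_mul (-a⁻¹)
    have ane : a ≠ 0 := fun h => by simp [h] at ha
    exact this.congr_deriv (by rw [mul_comm (-a⁻¹), mul_assoc, neg_mul_neg, mul_inv_cancel₀ ane, mul_one])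
  have htend : Filter.Tendsto (fun t : ℝ => -a⁻¹ * Complex.exp (-(a * t))) Filter.atTop (nhds 0) := by
    rw [tendsto_zero_iff_norm_tendsto_zero]
    have : (fun t : ℝ => ‖-a⁻¹ * Complex.exp (-(a * t))‖) = fun t => ‖a⁻¹‖ * Real.exp (-a.re * t) := by
      funext t
      rw [norm_mul, norm_neg, Complex.norm_exp]
      simp [neg_mul]
    rw [this]
    simpa using (Real.tendsto_exp_atBot.comp
      (Filter.tendsto_id.const_mul_atTop_of_neg (neg_neg_iff_pos.2 ha))).const_mul ‖a⁻¹‖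
  have key := integral_Ioi_of_hasDerivAt_of_tendsto (f := fun t : ℝ => -a⁻¹ * Complex.exp (-(a * t)))
    (continuous_const.mul hcont).continuousWithinAt hderiv hint htend
  constructor
  · rwa [integrableOn_Ici_iff_integrableOn_Ioi]
  · rw [integral_Ici_eq_integral_Ioi, key]
    simp [Complex.exp_ne_zero]

lemma lemB {d : ℕ} (a : Fin d → ℂ) (ha : ∀ i, 0 < (a i).re) :
    Integrable (Set.indicator {y : Fin d → ℝ | ∀ i, 0 ≤ y i}
      (fun y => ∏ i, Complex.exp (-(a i * y i)))) ∧
    ∫ y : Fin d → ℝ, Set.indicator {y : Fin d → ℝ | ∀ i, 0 ≤ y i}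
      (fun y => ∏ i, Complex.exp (-(a i * y i))) y = ∏ i, (a i)⁻¹ := by
  have key : Set.indicator {y : Fin d → ℝ | ∀ i, 0 ≤ y i}
      (fun y => ∏ i, Complex.exp (-(a i * y i))) =
      fun y : Fin d → ℝ => ∏ i, Set.indicator (Ici (0:ℝ))
        (fun t : ℝ => Complex.exp (-(a i * t))) (y i) := by
    funext y
    by_cases h : ∀ i, 0 ≤ y i
    · rw [Set.indicator_of_mem (show y ∈ {y : Fin d → ℝ | ∀ i, 0 ≤ y i} from h)]
      exact Finset.prod_congr rfl fun i _ =>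
        (Set.indicator_of_mem (show y i ∈ Ici (0:ℝ) from h i)
          (fun t : ℝ => Complex.exp (-(a i * t)))).symm
    · rw [Set.indicator_of_notMem (show y ∉ {y : Fin d → ℝ | ∀ i, 0 ≤ y i} from h)]
      push_neg at h
      obtain ⟨i, hi⟩ := h
      exact (Finset.prod_eq_zero (Finset.mem_univ i)
        (Set.indicator_of_notMem (show y i ∉ Ici (0:ℝ) from not_le.2 hi) _)).symm
  have hint : ∀ i, Integrable (Set.indicator (Ici (0:ℝ))
      (fun t : ℝ => Complex.exp (-(a i * t)))) :=
    fun i => (lemA (ha i)).1.integrable_indicator measurableSet_Ici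
  constructor
  · rw [key]
    exact Integrable.fintype_prod_dep hint
  · rw [key, integral_fintype_prod_volume_eq_prod]
    exact Finset.prod_congr rfl fun i _ => by
      rw [integral_indicator measurableSet_Ici, (lemA (ha i)).2]

lemma lemC {d : ℕ} (s : Finset (Fin d → ℤ)) (b : Module.Basis (Fin d) ℤ (Fin d → ℤ))
    (hsb : (s : Set (Fin d → ℤ)) ⊆ Set.range b) (hcard : s.card = d)
    (φ : (Fin d → ℝ) → ℂ) (l : (Fin d → ℝ) →ₗ[ℝ] ℂ)
    (hl : ∀ x ∈ coneOf s, φ x = l x)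
    (hpos : ∀ e ∈ s, 0 < (φ (fun j => (e j : ℝ))).re)
    (m : Fin d → ℝ) :
    IsClosed (coneOf s) ∧
    IntegrableOn (fun n : Fin d → ℝ =>
      Complex.exp (-(φ n) - Complex.I * (∑ j, n j * m j : ℝ))) (coneOf s) ∧
    (∫ n in coneOf s, Complex.exp (-(φ n) - Complex.I * (∑ j, n j * m j : ℝ))) =
      ∏ e ∈ s, (φ (fun j => (e j : ℝ)) + Complex.I * (∑ j, (e j : ℝ) * m j : ℝ))⁻¹ := by
  classical
  set f : (Fin d → ℝ) → ℂ :=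
    fun n => Complex.exp (-(φ n) - Complex.I * (∑ j, n j * m j : ℝ)) with hf
  -- s is the image of b
  have hs_eq : s = Finset.image b Finset.univ := by
    refine Finset.eq_of_subset_of_card_le (fun e he => ?_) ?_
    · obtain ⟨i, hi⟩ := hsb he
      exact Finset.mem_image.2 ⟨i, Finset.mem_univ i, hi⟩
    · calc (Finset.image b Finset.univ).card ≤ Finset.univ.card := Finset.card_image_le
        _ = d := by simp
        _ = s.card := hcard.symm
  have hbmem : ∀ i, b i ∈ s := fun i => by
    rw [hs_eq]; exact Finset.mem_image.2 ⟨i, Finset.mem_univ i, rfl⟩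
  -- the matrix and linear map
  set A : Matrix (Fin d) (Fin d) ℝ := Matrix.of fun i j => ((b j i : ℤ) : ℝ) with hA
  set T : (Fin d → ℝ) →ₗ[ℝ] (Fin d → ℝ) := Matrix.toLin' A with hT
  set B : Matrix (Fin d) (Fin d) ℤ := (Pi.basisFun ℤ (Fin d)).toMatrix ⇑b with hB
  have hAB : A = B.map (Int.cast : ℤ → ℝ) := by
    ext i j
    simp [hA, hB, Module.Basis.toMatrix_apply, Pi.basisFun_repr]
  have hdetB : IsUnit B.det := by
    have : Invertible B := (Pi.basisFun ℤ (Fin d)).invertibleToMatrix b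
    exact Matrix.isUnit_det_of_invertible B
  have hdetA : |A.det| = 1 := by
    have h1 : A.det = ((B.det : ℤ) : ℝ) := by
      rw [hAB]
      exact (RingHom.map_det (Int.castRingHom ℝ) B).symm
    rcases Int.isUnit_iff.1 hdetB with h | h <;> rw [h1, h] <;> norm_num
  have hdetA0 : A.det ≠ 0 := fun h => by rw [h] at hdetA; simp at hdetA
  have hdetAu : IsUnit A.det := isUnit_iff_ne_zero.2 hdetA0
  have hTapp : ∀ y : Fin d → ℝ, T y = ∑ i, y i • (fun j => ((b i j : ℤ) : ℝ)) := by
    intro y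
    funext j
    rw [hT, Matrix.toLin'_apply]
    simp only [Matrix.mulVec, dotProduct, Finset.sum_apply, Pi.smul_apply,
      smul_eq_mul, hA, Matrix.of_apply]
    exact Finset.sum_congr rfl fun i _ => mul_comm _ _
  -- cone = image of orthant
  set O : Set (Fin d → ℝ) := {y | ∀ i, 0 ≤ y i} with hO
  have hsum_image : ∀ c : (Fin d → ℤ) → ℝ,
      ∑ e ∈ s, c e • (fun j => ((e j : ℤ) : ℝ)) = T (fun i => c (b i)) := by
    intro c
    rw [hs_eq, Finset.sum_image (fun i _ j _ h => b.injective h), hTapp]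
  have hcone : coneOf s = ⇑T '' O := by
    ext x
    constructor
    · rintro ⟨c, hc0, rfl⟩
      exact ⟨fun i => c (b i), fun i => hc0 _, (hsum_image c).symm⟩
    · rintro ⟨y, hy, rfl⟩
      refine ⟨Function.extend ⇑b y 0, fun e => ?_, ?_⟩
      · rw [Function.extend_def]
        split_ifs with h
        · exact hy _
        · exact le_refl 0
      · rw [hsum_image]
        congr 1
        funext i
        rw [b.injective.extend_apply]
  -- measurable equiv
  have hinvA : Invertible A := A.invertibleOfIsUnitDet hdetAu
  set E : (Fin d → ℝ) ≃ₗ[ℝ] (Fin d → ℝ) := A.toLinearEquiv' hinvA with hE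
  have hET : ∀ x, E x = T x := fun x => rfl
  set L : (Fin d → ℝ) ≃L[ℝ] (Fin d → ℝ) := E.toContinuousLinearEquiv with hL
  set ψ : (Fin d → ℝ) ≃ᵐ (Fin d → ℝ) := L.toHomeomorph.toMeasurableEquiv with hψ
  have hψT : ∀ x, ψ x = T x := fun x => rfl
  have hmp : MeasurePreserving ⇑ψ volume volume := by
    refine ⟨ψ.measurable, ?_⟩
    have : ⇑ψ = ⇑T := funext hψT
    rw [this, Real.map_linearMap_volume_pi_eq_smul_volume_pi
      (by rw [LinearMap.det_toLin']; exact hdetA0)]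
    rw [LinearMap.det_toLin']
    rw [abs_inv, hdetA]
    norm_num
  -- closedness
  have hOclosed : IsClosed O := by
    have : O = ⋂ i, {y : Fin d → ℝ | 0 ≤ y i} := by
      ext y; simp [hO, Set.mem_iInter]
    rw [this]
    exact isClosed_iInter fun i => isClosed_le continuous_const (continuous_apply i)
  have hcone_pre : coneOf s = ⇑ψ.symm ⁻¹' O := by
    rw [hcone]
    ext x
    constructor
    · rintro ⟨y, hy, rfl⟩
      have : ψ.symm (T y) = y := by
        rw [show T y = ψ y from (hψT y).symm]; exact ψ.symm_apply_apply y
      simpa [Set.mem_preimage, this] using hy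
    · intro hx
      exact ⟨ψ.symm x, hx, by rw [← hψT, ψ.apply_symm_apply]⟩
  have hclosed : IsClosed (coneOf s) := by
    rw [hcone_pre]
    exact hOclosed.preimage L.toHomeomorph.symm.continuous
  have hmeas : MeasurableSet (coneOf s) := hclosed.measurableSet
  -- the exponents
  set a : Fin d → ℂ := fun i => φ (fun j => ((b i j : ℤ) : ℝ)) +
    Complex.I * (∑ j, ((b i j : ℤ) : ℝ) * m j : ℝ) with ha
  have hare : ∀ i, 0 < (a i).re := by
    intro i
    have := hpos (b i) (hbmem i)
    simpa [ha] using this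
  -- basis vectors are in the cone
  have hbic : ∀ i, (fun j => ((b i j : ℤ) : ℝ)) ∈ coneOf s := by
    intro i
    rw [hcone]
    refine ⟨Pi.single i 1, fun k => ?_, ?_⟩
    · rcases eq_or_ne k i with rfl | h
      · simp
      · simp [Pi.single_eq_of_ne h]
    · rw [hTapp]
      rw [Finset.sum_eq_single i]
      · simp
      · intro k _ hk; simp [Pi.single_eq_of_ne hk]
      · intro h; exact absurd (Finset.mem_univ i) h
  -- key pointwise identity on the orthant
  have hkey : ∀ y ∈ O, f (T y) = ∏ i, Complex.exp (-(a i * y i)) := by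
    intro y hy
    have hTy : T y ∈ coneOf s := hcone ▸ ⟨y, hy, rfl⟩
    have hφTy : φ (T y) = ∑ i, (y i : ℂ) * φ (fun j => ((b i j : ℤ) : ℝ)) := by
      rw [hl _ hTy, hTapp, map_sum]
      refine Finset.sum_congr rfl fun i _ => ?_
      rw [_root_.map_smul, ← hl _ (hbic i)]
      simp [Complex.real_smul]
    have hsum : (∑ j, (T y) j * m j) = ∑ i, y i * (∑ j, ((b i j : ℤ) : ℝ) * m j) := by
      have hTyj : ∀ j, (T y) j = ∑ i, y i * ((b i j : ℤ) : ℝ) := by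
        intro j
        rw [hTapp]
        simp [Finset.sum_apply]
      simp_rw [hTyj, Finset.sum_mul, Finset.mul_sum]
      rw [Finset.sum_comm]
      exact Finset.sum_congr rfl fun i _ => Finset.sum_congr rfl fun j _ => by ring
    rw [hf]
    simp only
    rw [hφTy, hsum, ← Complex.exp_sum]
    congr 1
    push_cast
    rw [Finset.mul_sum, ← Finset.sum_neg_distrib, ← Finset.sum_sub_distrib]
    refine Finset.sum_congr rfl fun i _ => ?_
    rw [ha]
    push_cast
    ring
  -- transfer the integral
  have hind : ∀ x, Set.indicator (coneOf s) f x =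
      Set.indicator O (fun y => f (T y)) (ψ.symm x) := by
    intro x
    by_cases hx : x ∈ coneOf s
    · rw [Set.indicator_of_mem hx, Set.indicator_of_mem (show ψ.symm x ∈ O from Set.mem_preimage.1 (hcone_pre ▸ hx : x ∈ ⇑ψ.symm ⁻¹' O))]
      congr 1
      rw [← hψT, ψ.apply_symm_apply]
    · rw [Set.indicator_of_notMem hx, Set.indicator_of_notMem]
      intro h
      exact hx (hcone_pre ▸ h)
  have hindO : Set.indicator O (fun y => f (T y)) =
      Set.indicator O (fun y => ∏ i, Complex.exp (-(a i * y i))) :=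
    Set.indicator_congr hkey
  obtain ⟨hBint, hBval⟩ := lemB a hare
  have hint2 : Integrable (Set.indicator (coneOf s) f) := by
    have h1 : Set.indicator (coneOf s) f =
        (Set.indicator O (fun y => ∏ i, Complex.exp (-(a i * y i)))) ∘ ⇑ψ.symm := by
      funext x
      rw [hind x, hindO]
      rfl
    rw [h1]
    exact ((hmp.symm ψ).integrable_comp_emb ψ.symm.measurableEmbedding).2 hBint
  refine ⟨hclosed, (integrable_indicator_iff hmeas).1 hint2, ?_⟩
  have hval : ∫ x, Set.indicator (coneOf s) f x = ∏ i, (a i)⁻¹ := by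
    calc ∫ x, Set.indicator (coneOf s) f x
        = ∫ x, (Set.indicator O (fun y => ∏ i, Complex.exp (-(a i * y i)))) (ψ.symm x) := by
          refine integral_congr_ae (Filter.Eventually.of_forall fun x => ?_)
          rw [hind x, hindO]
      _ = ∫ y, Set.indicator O (fun y => ∏ i, Complex.exp (-(a i * y i))) y :=
          (hmp.symm ψ).integral_comp ψ.symm.measurableEmbedding _
      _ = ∏ i, (a i)⁻¹ := hBval
  rw [← integral_indicator hmeas, hval, hs_eq,
    Finset.prod_image (fun i _ j _ h => b.injective h)]

lemma convex_coneOf {d : ℕ} (s : Finset (Fin d → ℤ)) : Convex ℝ (coneOf s) := by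
  rintro x ⟨c, hc, rfl⟩ y ⟨c', hc', rfl⟩ α β hα hβ hαβ
  refine ⟨fun e => α * c e + β * c' e, fun e =>
    add_nonneg (mul_nonneg hα (hc e)) (mul_nonneg hβ (hc' e)), ?_⟩
  rw [Finset.smul_sum, Finset.smul_sum, ← Finset.sum_add_distrib]
  refine Finset.sum_congr rfl fun e _ => ?_
  rw [smul_smul, smul_smul, add_smul]

lemma coneOf_subset_span {d : ℕ} (s : Finset (Fin d → ℤ)) :
    coneOf s ⊆ ↑(Submodule.span ℝ
      (↑(Finset.image (fun e : Fin d → ℤ => (fun j => (e j : ℝ))) s) : Set (Fin d → ℝ))) := by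
  rintro x ⟨c, hc, rfl⟩
  exact Submodule.sum_mem _ fun e he => Submodule.smul_mem _ _
    (Submodule.subset_span (by exact_mod_cast Finset.mem_image_of_mem _ he))


/-- with `Σ` a complete regular fan, `φ` piecewise linear with
`Re φ(e) > 0` on all generators, and `m ∈ M_ℝ`, the integral
`∫_{N_ℝ} e^{-φ(n) - i n(m)} dn` (Lebesgue measure normalized by the lattice `N`)
converges absolutely and equals the sum over the `d`-dimensional cones `σ` of
`∏_{e ∈ σ ∩ Σ₁} 1 / (φ(e) + i e(m))`. -/
theorem stmt8 {d : ℕ} (F : Finset (Finset (Fin d → ℤ)))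
    (hF : IsCompleteRegularFanGens F)
    (φ : (Fin d → ℝ) → ℂ) (hφ : IsPL F φ)
    (hpos : ∀ s ∈ F, ∀ e ∈ s, 0 < (φ (fun j => (e j : ℝ))).re)
    (m : Fin d → ℝ) :
    Integrable (fun n : Fin d → ℝ =>
      Complex.exp (-(φ n) - Complex.I * (∑ j, n j * m j : ℝ))) ∧
    (∫ n : Fin d → ℝ, Complex.exp (-(φ n) - Complex.I * (∑ j, n j * m j : ℝ))) =
      ∑ s ∈ F.filter (fun s => s.card = d), ∏ e ∈ s,
        (φ (fun j => (e j : ℝ)) + Complex.I * (∑ j, (e j : ℝ) * m j : ℝ))⁻¹ := by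
  classical
  set f : (Fin d → ℝ) → ℂ :=
    fun n => Complex.exp (-(φ n) - Complex.I * (∑ j, n j * m j : ℝ)) with hf
  set Fd : Finset (Finset (Fin d → ℤ)) := F.filter (fun s => s.card = d) with hFd
  have hFdF : ∀ s ∈ Fd, s ∈ F := fun s hs => (Finset.mem_filter.1 hs).1
  have hC : ∀ s ∈ Fd, IsClosed (coneOf s) ∧ IntegrableOn f (coneOf s) ∧
      (∫ n in coneOf s, f n) = ∏ e ∈ s,
        (φ (fun j => (e j : ℝ)) + Complex.I * (∑ j, (e j : ℝ) * m j : ℝ))⁻¹ := by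
    intro s hs
    rw [hFd, Finset.mem_filter] at hs
    obtain ⟨b, hsb⟩ := hF.regular s hs.1
    obtain ⟨l, hl⟩ := hφ s hs.1
    exact lemC s b hsb hs.2 φ l hl (hpos s hs.1) m
  -- cards are at most d
  have hcard_le : ∀ s ∈ F, s.card ≤ d := by
    intro s hs
    obtain ⟨b, hsb⟩ := hF.regular s hs
    have : s ⊆ Finset.image b Finset.univ := fun e he => by
      obtain ⟨i, hi⟩ := hsb he
      exact Finset.mem_image.2 ⟨i, Finset.mem_univ i, hi⟩
    calc s.card ≤ (Finset.image b Finset.univ).card := Finset.card_le_card this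
      _ ≤ Finset.univ.card := Finset.card_image_le
      _ = d := by simp
  -- interiors are pairwise disjoint
  have hdisj : (↑Fd : Set (Finset (Fin d → ℤ))).Pairwise
      (Function.onFun Disjoint fun s => interior (coneOf s)) := by
    intro s hs t ht hst
    rw [Function.onFun, Set.disjoint_left]
    intro x hxs hxt
    obtain ⟨u, _, huniq⟩ := hF.partition x
    exact hst ((huniq s ⟨hFdF s hs, interior_subset_intrinsicInterior hxs⟩).trans
      (huniq t ⟨hFdF t ht, interior_subset_intrinsicInterior hxt⟩).symm)
  -- frontier of each cone is null
  have hfront : ∀ s ∈ Fd, volume (frontier (coneOf s)) = 0 :=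
    fun s _ => (convex_coneOf s).addHaar_frontier volume
  have hCD : ∀ s ∈ Fd, volume (coneOf s \ interior (coneOf s)) = 0 := by
    intro s hs
    have := (hC s hs).1.frontier_eq
    rw [← this]
    exact hfront s hs
  -- a.e. cover by full-dimensional cones
  have hcover : ∀ᵐ x : Fin d → ℝ, x ∈ ⋃ s ∈ Fd, coneOf s := by
    set Z : Set (Fin d → ℝ) := ⋃ s ∈ F.filter (fun s => s.card ≠ d),
      (↑(Submodule.span ℝ
        (↑(Finset.image (fun e : Fin d → ℤ => (fun j => (e j : ℝ))) s) : Set (Fin d → ℝ))) :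
        Set (Fin d → ℝ)) with hZdef
    have hZ : volume Z = 0 := by
      rw [hZdef]
      refine (measure_biUnion_null_iff (Finset.countable_toSet _)).2 fun s hs => ?_
      simp only [Finset.mem_coe, Finset.mem_filter, Set.mem_setOf_eq] at hs
      refine Measure.addHaar_submodule volume _ fun htop => ?_
      have h1 : Module.finrank ℝ (⊤ : Submodule ℝ (Fin d → ℝ)) = d := by
        rw [finrank_top, Module.finrank_fintype_fun_eq_card, Fintype.card_fin]
      have h2 : Module.finrank ℝ (Submodule.span ℝ
          (↑(Finset.image (fun e : Fin d → ℤ => (fun j => (e j : ℝ))) s) : Set (Fin d → ℝ))) ≤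
          (Finset.image (fun e : Fin d → ℤ => (fun j => (e j : ℝ))) s).card :=
        finrank_span_finset_le_card (R := ℝ) _
      have h5 : Module.finrank ℝ (Submodule.span ℝ
          (↑(Finset.image (fun e : Fin d → ℤ => (fun j => (e j : ℝ))) s) : Set (Fin d → ℝ))) = d := by
        rw [htop]; exact h1
      rw [h5] at h2
      have h3 : (Finset.image (fun e : Fin d → ℤ => (fun j => (e j : ℝ))) s).card ≤ s.card :=
        Finset.card_image_le
      have h4 := hcard_le s hs.1
      exact hs.2 (le_antisymm h4 (le_trans h2 h3))
    rw [ae_iff]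
    refine measure_mono_null (fun x hx => ?_) hZ
    simp only [Set.mem_setOf_eq] at hx
    obtain ⟨u, ⟨huF, hui⟩, _⟩ := hF.partition x
    have hxu : x ∈ coneOf u := intrinsicInterior_subset hui
    by_cases hcard : u.card = d
    · exact absurd (Set.mem_biUnion (Finset.mem_filter.2 ⟨huF, hcard⟩) hxu) hx
    · exact Set.mem_biUnion (Finset.mem_filter.2 ⟨huF, hcard⟩) (coneOf_subset_span u hxu)
  have hDcover : ∀ᵐ x : Fin d → ℝ, x ∈ ⋃ s ∈ Fd, interior (coneOf s) := by
    have h2 : ∀ᵐ x : Fin d → ℝ, ∀ s ∈ Fd, x ∈ coneOf s → x ∈ interior (coneOf s) := by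
      rw [Filter.eventually_all_finset]
      intro s hs
      rw [ae_iff]
      refine measure_mono_null (fun x hx => ?_) (hCD s hs)
      simp only [Set.mem_setOf_eq, Classical.not_imp] at hx
      exact ⟨hx.1, hx.2⟩
    filter_upwards [hcover, h2] with x hx h2x
    obtain ⟨su, hsu⟩ := Set.mem_iUnion.1 hx
    obtain ⟨hsuF, hxsu⟩ := Set.mem_iUnion.1 hsu
    exact Set.mem_biUnion hsuF (h2x su hsuF hxsu)
  have hUmeas : MeasurableSet (⋃ s ∈ Fd, interior (coneOf s)) :=
    (isOpen_biUnion fun s _ => isOpen_interior).measurableSet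
  have hIntUnion : IntegrableOn f (⋃ s ∈ Fd, interior (coneOf s)) :=
    integrableOn_finset_iUnion.2 fun s hs => ((hC s hs).2.1).mono_set interior_subset
  have hae : Set.indicator (⋃ s ∈ Fd, interior (coneOf s)) f =ᵐ[volume] f := by
    filter_upwards [hDcover] with x hx
    rw [Set.indicator_of_mem hx]
  have hInt : Integrable f := (hIntUnion.integrable_indicator hUmeas).congr hae
  refine ⟨hInt, ?_⟩
  calc ∫ n, f n = ∫ n, Set.indicator (⋃ s ∈ Fd, interior (coneOf s)) f n :=
        (integral_congr_ae hae).symm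
    _ = ∫ n in ⋃ s ∈ Fd, interior (coneOf s), f n := integral_indicator hUmeas
    _ = ∑ s ∈ Fd, ∫ n in interior (coneOf s), f n :=
        integral_biUnion_finset Fd (fun s _ => isOpen_interior.measurableSet) hdisj
          (fun s hs => ((hC s hs).2.1).mono_set interior_subset)
    _ = ∑ s ∈ Fd, ∫ n in coneOf s, f n := by
        refine Finset.sum_congr rfl fun s hs => ?_
        refine setIntegral_congr_set ?_
        rw [MeasureTheory.ae_eq_set]
        constructor
        · rw [Set.diff_eq_empty.2 interior_subset]
          exact measure_empty
        · exact hCD s hs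
    _ = ∑ s ∈ Fd, ∏ e ∈ s,
        (φ (fun j => (e j : ℝ)) + Complex.I * (∑ j, (e j : ℝ) * m j : ℝ))⁻¹ :=
        Finset.sum_congr rfl fun s hs => (hC s hs).2.2
end

section
/- Let Σ be a complete regular fan in N_ℝ with one-dimensional generators Σ₁, and define for each cone σ ∈ Σ the rational function R_σ((u_e)_{e∈Σ₁}) = ∏_{e ∈ σ ∩ Σ₁} u_e/(1 − u_e), R_Σ = ∑_{σ ∈ Σ} R_σ, and Q_Σ((u_e)) = R_Σ((u_e)) ∏_{e ∈ Σ₁}(1 − u_e). Then Q_Σ is a polynomial in the variables u_e with Q_Σ(0) = 1, and Q_Σ − 1 is a sum of monomials each of total degree at least two. -/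
open MvPolynomial

private lemma prodX_eq {ι : Type*} [DecidableEq ι] (s : Finset ι) :
    (∏ f ∈ s, (X f : MvPolynomial ι ℂ)) = monomial (∑ f ∈ s, Finsupp.single f 1) 1 := by
  induction s using Finset.induction_on with
  | empty => simp
  | @insert _ _ ha ih =>
    rw [Finset.prod_insert ha, ih, Finset.sum_insert ha, ← pow_one (X _), X_pow_eq_monomial,
      monomial_mul, one_mul]

private lemma Dd_apply {ι : Type*} [DecidableEq ι] (s : Finset ι) (f : ι) :
    ((∑ g ∈ s, Finsupp.single g 1 : ι →₀ ℕ)) f = if f ∈ s then 1 else 0 := by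
  rw [Finset.sum_apply']
  simp [Finsupp.single_apply]

private lemma coeffP0 {ι : Type*} [DecidableEq ι] (t : Finset ι) :
    MvPolynomial.coeff 0 (∏ f ∈ t, (1 - X f : MvPolynomial ι ℂ)) = 1 := by
  induction t using Finset.induction_on with
  | empty => simp
  | @insert a t ha ih =>
    rw [Finset.prod_insert ha, sub_mul, one_mul, coeff_sub, ih]
    simp [coeff_X_mul']

private lemma coeffP1 {ι : Type*} [DecidableEq ι] (e : ι) (t : Finset ι) :
    MvPolynomial.coeff (Finsupp.single e 1) (∏ f ∈ t, (1 - X f : MvPolynomial ι ℂ)) =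
      if e ∈ t then -1 else 0 := by
  induction t using Finset.induction_on with
  | empty => simp [coeff_one, eq_comm, Finsupp.single_eq_zero]
  | @insert a t ha ih =>
    rw [Finset.prod_insert ha, sub_mul, one_mul, coeff_sub, ih, coeff_X_mul']
    by_cases hae : a = e
    · subst hae
      simp [ha, coeffP0, Finsupp.mem_support_iff]
    · have hsupp : a ∉ (Finsupp.single e 1 : ι →₀ ℕ).support := by
        simp [Finsupp.mem_support_iff, Finsupp.single_apply, Ne.symm hae, hae]
      rw [if_neg hsupp, sub_zero]
      simp [Finset.mem_insert, Ne.symm hae]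

private lemma sum_eq_one_single {ι : Type*} (m : ι →₀ ℕ) (h : (m.sum fun _ k => k) = 1) :
    ∃ e, m = Finsupp.single e 1 := by
  classical
  have hs : ∑ a ∈ m.support, m a = 1 := h
  have hne : m.support.Nonempty := by
    rcases Finset.eq_empty_or_nonempty m.support with h0 | h0
    · rw [h0] at hs; simp at hs
    · exact h0
  obtain ⟨e, he⟩ := hne
  have h1 : 1 ≤ m e := Nat.one_le_iff_ne_zero.mpr (Finsupp.mem_support_iff.mp he)
  have h2 : m e ≤ 1 := hs ▸ Finset.single_le_sum (fun a _ => Nat.zero_le _) he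
  have hme : m e = 1 := le_antisymm h2 h1
  have hrest : ∑ a ∈ m.support.erase e, m a = 0 := by
    have := Finset.sum_erase_add m.support m he
    omega
  refine ⟨e, Finsupp.ext fun f => ?_⟩
  by_cases hfe : f = e
  · subst hfe; simp [hme]
  · rw [Finsupp.single_apply, if_neg (Ne.symm hfe)]
    by_cases hf : f ∈ m.support
    · exact (Finset.sum_eq_zero_iff.mp hrest f (Finset.mem_erase.mpr ⟨hfe, hf⟩))
    · exact Finsupp.notMem_support_iff.mp hf

open MvPolynomial

/-- for a complete regular fan `Σ` with generators `Σ₁ = F.sup id`, the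
rational function `Q_Σ((u_e)) = (∑_{σ ∈ Σ} ∏_{e ∈ σ ∩ Σ₁} u_e/(1-u_e)) ∏_{e ∈ Σ₁} (1-u_e)`
is a polynomial in the `u_e` with constant term `1`, and `Q_Σ - 1` is a sum of monomials of
total degree at least two. -/
theorem stmt10 {d : ℕ} (F : Finset (Finset (Fin d → ℤ)))
    (hF : IsCompleteRegularFanGens F) :
    ∃ Q : MvPolynomial (Fin d → ℤ) ℂ,
      (∀ u : (Fin d → ℤ) → ℂ, (∀ e ∈ F.sup id, u e ≠ 1) →
        MvPolynomial.eval u Q =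
          (∑ s ∈ F, ∏ e ∈ s, u e / (1 - u e)) * ∏ e ∈ F.sup id, (1 - u e)) ∧
      MvPolynomial.coeff 0 Q = 1 ∧
      (∀ mono : (Fin d → ℤ) →₀ ℕ, MvPolynomial.coeff mono Q ≠ 0 →
        mono = 0 ∨ 2 ≤ mono.sum fun _ k => k) := by
  classical
  set E : Finset (Fin d → ℤ) := F.sup id with hE
  have hempty : (∅ : Finset (Fin d → ℤ)) ∈ F := by
    obtain ⟨s, ⟨hs, -⟩, -⟩ := hF.partition 0
    exact hF.downward s hs ∅ (Finset.empty_subset s)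
  have hsubE : ∀ s ∈ F, s ⊆ E := fun s hs => Finset.le_sup (f := id) hs
  refine ⟨∑ s ∈ F, (∏ f ∈ s, X f) * ∏ f ∈ E \ s, (1 - X f), ?_, ?_, ?_⟩
  · intro u hu
    rw [map_sum, Finset.sum_mul]
    refine Finset.sum_congr rfl fun s hs => ?_
    have hsub : s ⊆ E := hsubE s hs
    rw [← Finset.prod_sdiff hsub, map_mul, map_prod, map_prod]
    simp only [eval_X, map_sub, map_one]
    rw [mul_comm (∏ f ∈ E \ s, (1 - u f)) (∏ f ∈ s, (1 - u f)), ← mul_assoc,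
      ← Finset.prod_mul_distrib]
    congr 1
    refine Finset.prod_congr rfl fun f hf => ?_
    exact (div_mul_cancel₀ (u f) (sub_ne_zero.mpr (Ne.symm (hu f (hsub hf))))).symm
  · rw [MvPolynomial.coeff_sum]
    rw [Finset.sum_eq_single_of_mem ∅ hempty (fun s hs hne => ?_)]
    · simp [coeffP0]
    · rw [prodX_eq, MvPolynomial.coeff_monomial_mul', if_neg]
      intro hle
      obtain ⟨f, hf⟩ := Finset.nonempty_iff_ne_empty.mpr hne
      have h2 := Finsupp.le_def.mp hle f
      rw [Dd_apply] at h2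
      simp [hf] at h2
  · intro mono hmono
    by_contra hcon
    push_neg at hcon
    obtain ⟨hm0, hmlt⟩ := hcon
    have h1 : 1 ≤ mono.sum fun _ k => k := by
      obtain ⟨e, he⟩ : ∃ e, mono e ≠ 0 := by
        by_contra hno; push_neg at hno; exact hm0 (Finsupp.ext hno)
      have hle2 : mono e ≤ ∑ a ∈ mono.support, mono a :=
        Finset.single_le_sum (fun a _ => Nat.zero_le _) (Finsupp.mem_support_iff.mpr he)
      have hs : (mono.sum fun _ k => k) = ∑ a ∈ mono.support, mono a := rfl
      omega
    have hsum1 : (mono.sum fun _ k => k) = 1 := by omega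
    obtain ⟨e, rfl⟩ := sum_eq_one_single mono hsum1
    apply hmono
    rw [MvPolynomial.coeff_sum]
    have key : ∀ s ∈ F, s ≠ ∅ → s ≠ {e} →
        MvPolynomial.coeff (Finsupp.single e 1)
          ((∏ f ∈ s, X f) * ∏ f ∈ E \ s, (1 - X f : MvPolynomial (Fin d → ℤ) ℂ)) = 0 := by
      intro s hs hne hnse
      rw [prodX_eq, MvPolynomial.coeff_monomial_mul', if_neg]
      intro hle
      obtain ⟨f, hf, hfe⟩ : ∃ f ∈ s, f ≠ e := by
        by_contra hno; push_neg at hno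
        exact hnse ((Finset.Nonempty.subset_singleton_iff
          (Finset.nonempty_iff_ne_empty.mpr hne)).mp
          (fun x hx => Finset.mem_singleton.mpr (hno x hx)))
      have h2 := Finsupp.le_def.mp hle f
      rw [Dd_apply] at h2
      simp [hf, Finsupp.single_apply, Ne.symm hfe] at h2
    by_cases he : e ∈ E
    · have hsingle : ({e} : Finset (Fin d → ℤ)) ∈ F := by
        obtain ⟨s, hsF, hes⟩ := Finset.mem_sup.mp he
        exact hF.downward s hsF {e} (Finset.singleton_subset_iff.mpr hes)
      have hpairsub : ({∅, {e}} : Finset (Finset (Fin d → ℤ))) ⊆ F := by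
        intro s hsmem
        rcases Finset.mem_insert.mp hsmem with rfl | h
        · exact hempty
        · rw [Finset.mem_singleton.mp h]; exact hsingle
      have hvan : ∀ s ∈ F, s ∉ ({∅, {e}} : Finset (Finset (Fin d → ℤ))) →
          MvPolynomial.coeff (Finsupp.single e 1)
            ((∏ f ∈ s, X f) * ∏ f ∈ E \ s, (1 - X f : MvPolynomial (Fin d → ℤ) ℂ)) = 0 := by
        intro s hs hnot
        simp only [Finset.mem_insert, Finset.mem_singleton, not_or] at hnot
        exact key s hs hnot.1 hnot.2
      rw [← Finset.sum_subset hpairsub hvan,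
        Finset.sum_pair (Finset.singleton_ne_empty e).symm]
      rw [Finset.prod_empty, one_mul, Finset.sdiff_empty, coeffP1, if_pos he]
      rw [prodX_eq, Finset.sum_singleton, MvPolynomial.coeff_monomial_mul', if_pos le_rfl,
        tsub_self, one_mul, coeffP0]
      ring
    · refine Finset.sum_eq_zero fun s hs => ?_
      by_cases hse : s = ∅
      · subst hse
        rw [Finset.prod_empty, one_mul, Finset.sdiff_empty, coeffP1, if_neg he]
      · refine key s hs hse fun h => he ?_
        exact Finset.mem_sup.mpr ⟨s, hs, by rw [h]; exact Finset.mem_singleton_self e⟩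
end

section
/- Let V be a finite-dimensional real vector space, c : V → ℝ_{≥0} a sufficient function, v₀ ∈ V nonzero, and V₁ ⊂ V a hyperplane with v₀ ∉ V₁. Then the function c₀ : V₁ → ℝ_{≥0} defined by c₀(v₁) = ∫_{−∞}^{∞} c(v₁ + τ v₀) dτ is a sufficient function on V₁. -/
open MeasureTheory Filter
set_option maxHeartbeats 1000000
set_option synthInstance.maxHeartbeats 400000

/-- A nonnegative function `c` on a finite-dimensional real vector space is *sufficient* if
for every linear subspace `U` (with any Haar measure) the translates `u ↦ c(v+u)` are
integrable over `U`, and for every `v ∉ U` the integrals `c_U(τv) = ∫_U c(τv+u) du` tend to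
`0` as `τ → ±∞`. -/
def Sufficient (V : Type*) [NormedAddCommGroup V] [NormedSpace ℝ V]
    [MeasurableSpace V] (c : V → ℝ) : Prop :=
  ∀ (U : Submodule ℝ V) (μ : Measure U), Measure.IsAddHaarMeasure μ →
    (∀ v : V, Integrable (fun u : U => c (v + (u : V))) μ) ∧
    (∀ v : V, v ∉ U →
      Tendsto (fun τ : ℝ => ∫ u : U, c (τ • v + (u : V)) ∂μ) atTop (nhds 0) ∧
      Tendsto (fun τ : ℝ => ∫ u : U, c (τ • v + (u : V)) ∂μ) atBot (nhds 0))

/-- if `c` is a sufficient function on `V`, `v₀ ≠ 0`, and `V₁` is a hyperplane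
with `v₀ ∉ V₁`, then `c₀(v₁) = ∫_ℝ c(v₁ + τ v₀) dτ` is a (nonnegative) sufficient function
on `V₁`. -/
theorem stmt11 {V : Type*} [NormedAddCommGroup V] [NormedSpace ℝ V]
    [FiniteDimensional ℝ V] [MeasurableSpace V] [BorelSpace V]
    (c : V → ℝ) (hc0 : ∀ v, 0 ≤ c v) (hc : Sufficient V c)
    (v₀ : V) (hv₀ : v₀ ≠ 0)
    (V₁ : Submodule ℝ V) (hV₁ : Module.finrank ℝ V₁ + 1 = Module.finrank ℝ V)
    (hv₀₁ : v₀ ∉ V₁) :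
    (∀ v₁ : V₁, 0 ≤ ∫ τ : ℝ, c ((v₁ : V) + τ • v₀)) ∧
    Sufficient V₁ (fun v₁ : V₁ => ∫ τ : ℝ, c ((v₁ : V) + τ • v₀)) := by
  refine ⟨fun v₁ => integral_nonneg fun τ => hc0 _, ?_⟩
  intro U μ hμ
  haveI := hμ
  -- The linear map (u, τ) ↦ u + τ • v₀ from U × ℝ to V
  set L : (U × ℝ) →ₗ[ℝ] V :=
    LinearMap.coprod (V₁.subtype.comp U.subtype) (LinearMap.toSpanSingleton ℝ V v₀) with hLdef
  have hLapply : ∀ p : U × ℝ, L p = ((p.1 : V₁) : V) + p.2 • v₀ := by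
    intro p; simp [hLdef, LinearMap.toSpanSingleton_apply]
  have hL : Function.Injective L := by
    rw [← LinearMap.ker_eq_bot, LinearMap.ker_eq_bot']
    rintro ⟨u, τ⟩ hp
    rw [hLapply] at hp
    have hτ : τ = 0 := by
      by_contra hτ
      apply hv₀₁
      have h1 : τ • v₀ = -((u : V₁) : V) := by
        have := hp
        simp only at this
        linear_combination (norm := module) this
      have : v₀ = τ⁻¹ • (-((u : V₁) : V)) := by
        rw [← h1, smul_smul, inv_mul_cancel₀ hτ, one_smul]
      rw [this]
      exact V₁.smul_mem _ (V₁.neg_mem (u : V₁).2)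
    have hu : ((u : V₁) : V) = 0 := by simpa [hτ] using hp
    have : (u : V₁) = 0 := by exact_mod_cast hu
    have : u = 0 := by exact_mod_cast this
    simp [this, hτ]
  set W : Submodule ℝ V := LinearMap.range L with hWdef
  let e : (U × ℝ) ≃ₗ[ℝ] W := LinearEquiv.ofInjective L hL
  let eC : (U × ℝ) ≃L[ℝ] W := e.toContinuousLinearEquiv
  let ψ : (U × ℝ) ≃ᵐ W := eC.toHomeomorph.toMeasurableEquiv
  have hψ : ∀ p : U × ℝ, ((ψ p : V)) = ((p.1 : V₁) : V) + p.2 • v₀ := by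
    intro p
    show ((e p : W) : V) = _
    rw [← hLapply]
    rfl
  set ν : Measure W := (μ.prod volume).map ψ with hνdef
  have hνH : ν.IsAddHaarMeasure := by
    have : ν = (μ.prod volume).map eC := by
      rw [hνdef]; rfl
    rw [this]
    infer_instance
  haveI := hνH
  obtain ⟨hint, htend⟩ := hc W ν hνH
  -- key: for any w : V, the double integral equals the integral over W
  have key : ∀ w : V,
      Integrable (fun p : U × ℝ => c (w + (((p.1 : V₁) : V) + p.2 • v₀))) (μ.prod volume) ∧
      ∫ u : U, (∫ τ : ℝ, c (w + (((u : V₁) : V) + τ • v₀))) ∂μ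
        = ∫ x : W, c (w + (x : V)) ∂ν := by
    intro w
    have hmap : Integrable (fun p : U × ℝ => c (w + ((ψ p : W) : V))) (μ.prod volume) :=
      (MeasureTheory.integrable_map_equiv ψ (fun x : W => c (w + (x : V)))).mp (hint w)
    have hI : Integrable (fun p : U × ℝ => c (w + (((p.1 : V₁) : V) + p.2 • v₀)))
        (μ.prod volume) := by
      simpa [hψ] using hmap
    refine ⟨hI, ?_⟩
    rw [integral_integral hI]
    rw [hνdef, MeasureTheory.integral_map_equiv ψ (fun x : W => c (w + (x : V)))]
    refine integral_congr_ae (Eventually.of_forall fun p => ?_)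
    simp [hψ]
  constructor
  · intro v
    have hI := (key (v : V)).1
    have heq : (fun u : U => ∫ τ : ℝ, c ((v : V) + (((u : V₁) : V) + τ • v₀)))
        = fun u : U => ∫ τ : ℝ, c (((v + u : V₁) : V) + τ • v₀) := by
      funext u
      congr 1
      funext τ
      congr 1
      push_cast
      module
    exact heq ▸ hI.integral_prod_left
  · intro v hv
    have hvW : (v : V) ∉ W := by
      intro hvW
      obtain ⟨⟨u, τ⟩, hp⟩ := hvW
      rw [hLapply] at hp
      have hτ : τ = 0 := by
        by_contra hτ
        apply hv₀₁
        have h1 : τ • v₀ = (v : V) - ((u : V₁) : V) := by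
          have := hp
          simp only at this
          linear_combination (norm := module) this
        have : v₀ = τ⁻¹ • ((v : V) - ((u : V₁) : V)) := by
          rw [← h1, smul_smul, inv_mul_cancel₀ hτ, one_smul]
        rw [this]
        exact V₁.smul_mem _ (V₁.sub_mem v.2 (u : V₁).2)
      have : ((u : V₁) : V) = (v : V) := by simpa [hτ] using hp
      have : (u : V₁) = v := by exact_mod_cast this
      exact hv (this ▸ u.2)
    have heq : ∀ τ : ℝ,
        (∫ u : U, (∫ σ : ℝ, c (((((τ • v + u : V₁)) : V)) + σ • v₀)) ∂μ)
          = ∫ x : W, c (τ • (v : V) + (x : V)) ∂ν := by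
      intro τ
      have := (key (τ • (v : V))).2
      rw [← this]
      congr 1
      funext u
      congr 1
      funext σ
      congr 1
      push_cast
      module
    obtain ⟨h1, h2⟩ := htend (v : V) hvW
    constructor
    · refine h1.congr' ?_
      filter_upwards with τ using (heq τ).symm
    · refine h2.congr' ?_
      filter_upwards with τ using (heq τ).symm
end

section
/- Let E be a finite-dimensional real vector space, V ⊂ E a subspace, l₁,…,l_m ∈ E∨ linearly independent linear forms, and B ⊂ E an open convex neighborhood of 0 with l_j(x) > −1 for all x ∈ B and all j. Let f be a meromorphic function on the tube domain T_B = B + iE that is distinguished with respect to (V; l₁,…,l_m), and let C be a connected component of B ∖ ∪_j Ker(l_j). Then the integral f̃_C(z) = (2π)^{−dim V} ∫_V f(z+iv) dv converges absolutely and locally uniformly on the tube T_C = C + iE, and f̃_C is holomorphic on T_C. -/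
open MeasureTheory Filter

lemma aux_clm_apply {n : ℕ} (L : (Fin n → ℂ) →L[ℂ] ℂ) (w : Fin n → ℂ) :
    L w = ∑ k, w k • L (Pi.single k 1) := by
  have hw : w = ∑ k, w k • (Pi.single k 1 : Fin n → ℂ) := by
    funext i
    simp [Finset.sum_apply, Pi.single_apply, smul_eq_mul, mul_ite]
  conv_lhs => rw [hw]
  rw [map_sum]
  exact Finset.sum_congr rfl fun k _ => by rw [ContinuousLinearMap.map_smul]

lemma aux_clm_norm {n : ℕ} (L : (Fin n → ℂ) →L[ℂ] ℂ) :
    ‖L‖ ≤ ∑ k, ‖L (Pi.single k 1)‖ := by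
  refine L.opNorm_le_bound (Finset.sum_nonneg fun k _ => norm_nonneg _) fun w => ?_
  rw [aux_clm_apply]
  refine (norm_sum_le _ _).trans ?_
  rw [Finset.sum_mul]
  refine Finset.sum_le_sum fun k _ => ?_
  rw [norm_smul]
  calc ‖w k‖ * ‖L (Pi.single k 1)‖ ≤ ‖w‖ * ‖L (Pi.single k 1)‖ := by
        gcongr; exact norm_le_pi_norm w k
    _ = ‖L (Pi.single k 1)‖ * ‖w‖ := mul_comm _ _

lemma aux_clm_repr {n : ℕ} (L : (Fin n → ℂ) →L[ℂ] ℂ) :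
    L = ∑ k, L (Pi.single k 1) • (ContinuousLinearMap.proj k :
      (Fin n → ℂ) →L[ℂ] ℂ) := by
  ext w
  rw [ContinuousLinearMap.sum_apply]
  simp only [ContinuousLinearMap.smul_apply, ContinuousLinearMap.proj_apply]
  rw [aux_clm_apply]
  exact Finset.sum_congr rfl fun k _ => by simp [smul_eq_mul, mul_comm]

set_option synthInstance.maxHeartbeats 1000000 in
set_option maxHeartbeats 1000000 in
lemma sufficient_integrable {n : ℕ} (V : Submodule ℝ (Fin n → ℝ)) (c : V → ℝ)
    (hsuff : Sufficient V c) (μ : Measure V) [μ.IsAddHaarMeasure] : Integrable c μ := by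
  let e0 : (⊤ : Submodule ℝ (↥V)) ≃ₗ[ℝ] ↥V := Submodule.topEquiv
  let e := LinearEquiv.toContinuousLinearEquiv (𝕜 := ℝ) (E := ↥V)
    (F := ↥(⊤ : Submodule ℝ (↥V))) e0.symm
  haveI hH : (μ.map e).IsAddHaarMeasure := e.toAddEquiv.isAddHaarMeasure_map μ e.continuous e.symm.continuous
  obtain ⟨hint, -⟩ := hsuff ⊤ (μ.map e) hH
  have h0 := hint 0
  have he : MeasurableEmbedding (⇑e) := e.toHomeomorph.measurableEmbedding
  rw [he.integrable_map_iff] at h0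
  have heq : ((fun u : (⊤ : Submodule ℝ (↥V)) => c (0 + (u : V))) ∘ ⇑e) = c := by
    funext v
    show c (0 + ((e v : (⊤ : Submodule ℝ (↥V))) : V)) = c v
    congr 1
    rw [zero_add]
    rfl
  rwa [heq] at h0

set_option maxHeartbeats 1000000 in
/-- Let `E = ℝⁿ`, `V ⊆ E` a subspace, `l₁,…,l_m` linearly independent linear
forms (with coefficient vectors `a j`), `B` an open convex neighborhood of `0` with
`l_j > -1` on `B`, and `f` a meromorphic function on the tube `T_B` distinguished with
respect to `(V; l₁,…,l_m)`;  i.e. `g(z) = f(z) ∏_j l_j(z)/(l_j(z)+1)` is holomorphic on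
`T_B` and `‖g(z+iv)‖ ≤ κ(K) c(v)` on compacts `K ⊆ T_B` for a sufficient function `c`.
If `C` is the connected component of `B ∖ ⋃_j Ker l_j` of a point `x₀`, then for every
`z` in the tube `T_C` the integral `∫_V f(z+iv) dv` converges absolutely, and
`f̃_C(z) = (2π)^{-dim V} ∫_V f(z+iv) dv` is holomorphic on `T_C`. -/
theorem stmt12 {n m : ℕ} (a : Fin m → Fin n → ℝ) (ha : LinearIndependent ℝ a)
    (V : Submodule ℝ (Fin n → ℝ))
    (B : Set (Fin n → ℝ)) (hBopen : IsOpen B) (hBconv : Convex ℝ B)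
    (hB0 : (0 : Fin n → ℝ) ∈ B)
    (hBl : ∀ x ∈ B, ∀ j, -1 < ∑ i, a j i * x i)
    (g : (Fin n → ℂ) → ℂ)
    (hg : DifferentiableOn ℂ g {z : Fin n → ℂ | (fun i => (z i).re) ∈ B})
    (c : V → ℝ) (hc0 : ∀ v, 0 ≤ c v) (hsuff : Sufficient V c)
    (hbound : ∀ K ⊆ {z : Fin n → ℂ | (fun i => (z i).re) ∈ B}, IsCompact K →
      ∃ κ : ℝ, ∀ z ∈ K, ∀ v : V,
        ‖g (fun i => z i + ((v : Fin n → ℝ) i) * Complex.I)‖ ≤ κ * c v)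
    (f : (Fin n → ℂ) → ℂ)
    (hf : ∀ z : Fin n → ℂ,
      f z = g z * ∏ j, ((∑ i, (a j i : ℂ) * z i) + 1) / (∑ i, (a j i : ℂ) * z i))
    (x₀ : Fin n → ℝ) (hx₀ : x₀ ∈ B \ ⋃ j, {x : Fin n → ℝ | ∑ i, a j i * x i = 0})
    (C : Set (Fin n → ℝ))
    (hC : C = connectedComponentIn (B \ ⋃ j, {x : Fin n → ℝ | ∑ i, a j i * x i = 0}) x₀)
    (μ : Measure V) [Measure.IsAddHaarMeasure μ] :
    (∀ z ∈ {z : Fin n → ℂ | (fun i => (z i).re) ∈ C},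
      Integrable (fun v : V => f (fun i => z i + ((v : Fin n → ℝ) i) * Complex.I)) μ) ∧
    DifferentiableOn ℂ
      (fun z : Fin n → ℂ => ((2 * Real.pi : ℂ) ^ (Module.finrank ℝ V))⁻¹ *
        ∫ v : V, f (fun i => z i + ((v : Fin n → ℝ) i) * Complex.I) ∂μ)
      {z : Fin n → ℂ | (fun i => (z i).re) ∈ C} := by
  classical
  set ι : V → (Fin n → ℂ) := fun v => fun i => (((v : Fin n → ℝ) i : ℝ) : ℂ) * Complex.I
    with hιdef
  have hre_add : ∀ (w : Fin n → ℂ) (v : V) (i : Fin n), ((w + ι v) i).re = (w i).re := by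
    intro w v i
    simp [hιdef, Complex.add_re, Complex.mul_I_re]
  have hre_single : ∀ (w : Fin n → ℂ) (t : ℂ), t.re = 0 → ∀ (k : Fin n) (i : Fin n),
      ((w + t • (Pi.single k 1 : Fin n → ℂ)) i).re = (w i).re := by
    intro w t ht k i
    by_cases h : i = k <;>
      simp [h, Pi.single_apply, smul_eq_mul, Complex.mul_re, ht, Complex.add_re]
  have hLre : ∀ (j : Fin m) (w : Fin n → ℂ),
      (∑ i, (a j i : ℂ) * w i).re = ∑ i, a j i * (w i).re := by
    intro j w
    rw [Complex.re_sum]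
    exact Finset.sum_congr rfl fun i _ => Complex.re_ofReal_mul _ _
  set S : Set (Fin n → ℂ) :=
    {z | (fun i => (z i).re) ∈ B ∧ ∀ j, (∑ i, a j i * (z i).re) ≠ 0} with hSdef
  have hTBopen : IsOpen {z : Fin n → ℂ | (fun i => (z i).re) ∈ B} :=
    hBopen.preimage (continuous_pi fun i => Complex.continuous_re.comp (continuous_apply i))
  have hSopen : IsOpen S := by
    have h2 : IsOpen {z : Fin n → ℂ | ∀ j, (∑ i, a j i * (z i).re) ≠ 0} := by
      rw [Set.setOf_forall]
      refine isOpen_iInter_of_finite fun j => ?_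
      have hco : Continuous fun z : Fin n → ℂ => ∑ i, a j i * (z i).re := by
        refine continuous_finset_sum _ fun i _ => ?_
        exact continuous_const.mul (Complex.continuous_re.comp (continuous_apply i))
      exact isOpen_compl_singleton.preimage hco
    exact hTBopen.inter h2
  have hfS : DifferentiableOn ℂ f S := by
    have hfeq : f = fun z => g z *
        ∏ j, ((∑ i, (a j i : ℂ) * z i) + 1) / (∑ i, (a j i : ℂ) * z i) := funext hf
    rw [hfeq]
    intro z hz
    apply DifferentiableAt.differentiableWithinAt
    have hlin : ∀ j : Fin m, DifferentiableAt ℂ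
        (fun z : Fin n → ℂ => ∑ i, (a j i : ℂ) * z i) z := by
      intro j
      refine DifferentiableAt.fun_sum fun i _ => ?_
      have hproj : DifferentiableAt ℂ (fun z : Fin n → ℂ => z i) z :=
        (ContinuousLinearMap.proj i : (Fin n → ℂ) →L[ℂ] ℂ).differentiableAt
      exact hproj.const_mul _
    have hfactor : ∀ j : Fin m, DifferentiableAt ℂ
        (fun z : Fin n → ℂ => ((∑ i, (a j i : ℂ) * z i) + 1) / (∑ i, (a j i : ℂ) * z i)) z := by
      intro j
      have hne : (∑ i, (a j i : ℂ) * z i) ≠ 0 := fun h0 =>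
        hz.2 j (by rw [← hLre j z, h0, Complex.zero_re])
      have h1 : DifferentiableAt ℂ (fun z : Fin n → ℂ =>
          ((∑ i, (a j i : ℂ) * z i) + 1) * (∑ i, (a j i : ℂ) * z i)⁻¹) z :=
        ((hlin j).add_const 1).mul ((hlin j).inv hne)
      simpa [div_eq_mul_inv] using h1
    have hall : ∀ u : Finset (Fin m), DifferentiableAt ℂ
        (fun z : Fin n → ℂ =>
          ∏ j ∈ u, ((∑ i, (a j i : ℂ) * z i) + 1) / (∑ i, (a j i : ℂ) * z i)) z := by
      intro u
      induction u using Finset.induction_on with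
      | empty => simpa using differentiableAt_const (1 : ℂ)
      | @insert j u hju ih =>
        simp only [Finset.prod_insert hju]
        exact (hfactor _).mul ih
    exact DifferentiableAt.mul (hg.differentiableAt (hTBopen.mem_nhds hz.1)) (hall Finset.univ)
  have hC' : C ⊆ B \ ⋃ j, {x : Fin n → ℝ | ∑ i, a j i * x i = 0} :=
    hC ▸ connectedComponentIn_subset _ _
  have hCopen : IsOpen C := by
    rw [hC]
    refine IsOpen.connectedComponentIn (hBopen.sdiff ?_)
    refine isClosed_iUnion_of_finite fun j => ?_
    exact isClosed_eq (continuous_finset_sum _ fun i _ =>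
      continuous_const.mul (continuous_apply i)) continuous_const
  have hTC : IsOpen {z : Fin n → ℂ | (fun i => (z i).re) ∈ C} :=
    hCopen.preimage (continuous_pi fun i => Complex.continuous_re.comp (continuous_apply i))
  have hTCS : ∀ z : Fin n → ℂ, (fun i => (z i).re) ∈ C → z ∈ S := by
    intro z hz
    obtain ⟨hzB, hzn⟩ := hC' hz
    exact ⟨hzB, fun j h0 => hzn (Set.mem_iUnion.2 ⟨j, h0⟩)⟩
  have hmemS : ∀ w ∈ S, ∀ v : V, w + ι v ∈ S := by
    intro w hw v
    constructor
    · have hre : (fun i => ((w + ι v) i).re) = fun i => (w i).re := funext (hre_add w v)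
      show (fun i => ((w + ι v) i).re) ∈ B
      rw [hre]
      exact hw.1
    · intro j
      simp only [hre_add w v]
      exact hw.2 j
  have hmemS' : ∀ w ∈ S, ∀ (t : ℂ), t.re = 0 → ∀ k : Fin n,
      w + t • (Pi.single k 1 : Fin n → ℂ) ∈ S := by
    intro w hw t ht k
    constructor
    · have hre : (fun i => ((w + t • (Pi.single k 1 : Fin n → ℂ)) i).re) = fun i => (w i).re :=
        funext (hre_single w t ht k)
      show (fun i => ((w + t • (Pi.single k 1 : Fin n → ℂ)) i).re) ∈ B
      rw [hre]
      exact hw.1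
    · intro j
      simp only [hre_single w t ht k]
      exact hw.2 j
  have hι_cont : Continuous ι := by
    apply continuous_pi; intro i
    exact (Complex.continuous_ofReal.comp
      ((continuous_apply i).comp continuous_subtype_val)).mul continuous_const
  have hcont : ∀ w ∈ S, Continuous fun v : V => f (w + ι v) := by
    intro w hw
    exact (hfS.continuousOn).comp_continuous (continuous_const.add hι_cont)
      (fun v => hmemS w hw v)
  have hfb : ∀ K : Set (Fin n → ℂ), K ⊆ {z | (fun i => (z i).re) ∈ C} → IsCompact K →
      K.Nonempty → ∃ κ' : ℝ, 0 ≤ κ' ∧ ∀ z' ∈ K, ∀ v : V, ‖f (z' + ι v)‖ ≤ κ' * c v := by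
    intro K hKC hKcpt hKne
    have hKB : K ⊆ {z : Fin n → ℂ | (fun i => (z i).re) ∈ B} := fun z hz => (hC' (hKC hz)).1
    obtain ⟨κ, hκ⟩ := hbound K hKB hKcpt
    have hδ : ∀ j : Fin m, ∃ δ : ℝ, 0 < δ ∧ ∀ z ∈ K, δ ≤ |∑ i, a j i * (z i).re| := by
      intro j
      have hcoj : ContinuousOn (fun z : Fin n → ℂ => |∑ i, a j i * (z i).re|) K := by
        refine Continuous.continuousOn ?_
        exact (continuous_finset_sum _ fun i _ =>
          continuous_const.mul (Complex.continuous_re.comp (continuous_apply i))).abs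
      obtain ⟨z₁, hz₁K, hz₁min⟩ := hKcpt.exists_isMinOn hKne hcoj
      exact ⟨_, abs_pos.2 ((hTCS z₁ (hKC hz₁K)).2 j), fun z hz => hz₁min hz⟩
    choose δ hδpos hδle using hδ
    refine ⟨max κ 0 * (∏ j, (1 + (δ j)⁻¹)),
      mul_nonneg (le_max_right _ _) (Finset.prod_nonneg fun j _ => by
        have h := hδpos j
        have h2 : (0 : ℝ) < (δ j)⁻¹ := inv_pos.2 h
        linarith), ?_⟩
    intro z' hz' v
    have hz'S : z' ∈ S := hTCS z' (hKC hz')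
    rw [hf (z' + ι v), norm_mul, norm_prod]
    have hg_le : ‖g (z' + ι v)‖ ≤ max κ 0 * c v := by
      have h := hκ z' hz' v
      exact h.trans (mul_le_mul_of_nonneg_right (le_max_left _ _) (hc0 v))
    have hprod : ∀ j : Fin m,
        ‖((∑ i, (a j i : ℂ) * (z' + ι v) i) + 1) / (∑ i, (a j i : ℂ) * (z' + ι v) i)‖
          ≤ 1 + (δ j)⁻¹ := by
      intro j
      set L := ∑ i, (a j i : ℂ) * (z' + ι v) i with hLdef
      have hLrebound : δ j ≤ |L.re| := by
        rw [hLdef, hLre j (z' + ι v)]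
        simp only [hre_add z' v]
        exact hδle j z' hz'
      have hLnorm : δ j ≤ ‖L‖ := hLrebound.trans (Complex.abs_re_le_norm L)
      have hLne : L ≠ 0 := by
        intro h
        rw [h, norm_zero] at hLnorm
        exact absurd hLnorm (not_le.2 (hδpos j))
      have hLrw : (L + 1) / L = 1 + L⁻¹ := by field_simp
      rw [hLrw]
      refine (norm_add_le _ _).trans ?_
      rw [norm_one, norm_inv]
      have : ‖L‖⁻¹ ≤ (δ j)⁻¹ := inv_anti₀ (hδpos j) hLnorm
      linarith
    calc ‖g (z' + ι v)‖ *
        ∏ j, ‖((∑ i, (a j i : ℂ) * (z' + ι v) i) + 1) / (∑ i, (a j i : ℂ) * (z' + ι v) i)‖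
        ≤ (max κ 0 * c v) * ∏ j, (1 + (δ j)⁻¹) := by
          refine mul_le_mul hg_le ?_ (Finset.prod_nonneg fun j _ => norm_nonneg _)
            (mul_nonneg (le_max_right _ _) (hc0 v))
          exact Finset.prod_le_prod (fun j _ => norm_nonneg _) (fun j _ => hprod j)
      _ = (max κ 0 * (∏ j, (1 + (δ j)⁻¹))) * c v := by ring
  have hcInt : Integrable c μ := sufficient_integrable V c hsuff μ
  have hInt : ∀ z : Fin n → ℂ, (fun i => (z i).re) ∈ C →
      Integrable (fun v : V => f (z + ι v)) μ := by
    intro z hz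
    obtain ⟨κ', hκ'0, hκ'⟩ := hfb {z} (by simpa using hz) isCompact_singleton ⟨z, rfl⟩
    refine Integrable.mono' (hcInt.const_mul κ') ((hcont z (hTCS z hz)).aestronglyMeasurable) ?_
    exact ae_of_all _ fun v => hκ' z rfl v
  constructor
  · intro z hz
    exact hInt z hz
  · intro z₀ hz₀
    obtain ⟨R, hR, hRsub⟩ := Metric.isOpen_iff.1 hTC z₀ hz₀
    set r := R / 3 with hrdef
    have hr : 0 < r := by positivity
    have hKsub : Metric.closedBall z₀ (2 * r) ⊆ {z : Fin n → ℂ | (fun i => (z i).re) ∈ C} := by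
      refine (Metric.closedBall_subset_ball ?_).trans hRsub
      rw [hrdef]; linarith
    obtain ⟨κ', hκ'0, hκ'⟩ := hfb _ hKsub (isCompact_closedBall _ _)
      ⟨z₀, Metric.mem_closedBall_self (by positivity)⟩
    have hdiffat : ∀ x : Fin n → ℂ, x ∈ S → ∀ v : V,
        DifferentiableAt ℂ (fun y => f (y + ι v)) x := by
      intro x hx v
      have h1 : DifferentiableAt ℂ f (x + ι v) :=
        hfS.differentiableAt (hSopen.mem_nhds (hmemS x hx v))
      exact h1.comp x (differentiableAt_id.add_const (ι v))
    set F' : (Fin n → ℂ) → V → (Fin n → ℂ) →L[ℂ] ℂ :=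
      fun x v => fderiv ℂ (fun y => f (y + ι v)) x with hF'def
    have hdirectional : ∀ x : Fin n → ℂ, x ∈ S → ∀ (v : V) (k : Fin n),
        HasDerivAt (fun t : ℂ => f (x + t • (Pi.single k 1 : Fin n → ℂ) + ι v)) (F' x v ((Pi.single k 1 : Fin n → ℂ))) 0 := by
      intro x hx v k
      have h2 : HasDerivAt (fun t : ℂ => x + t • (Pi.single k 1 : Fin n → ℂ))
          ((Pi.single k 1 : Fin n → ℂ)) 0 := by
        simpa using ((hasDerivAt_id (0 : ℂ)).smul_const (Pi.single k 1 : Fin n → ℂ)).const_add x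
      have h1' : HasFDerivAt (fun y => f (y + ι v)) (F' x v)
          (x + (0 : ℂ) • (Pi.single k 1 : Fin n → ℂ)) := by
        simpa using (hdiffat x hx v).hasFDerivAt
      simpa [Function.comp_def] using h1'.comp_hasDerivAt 0 h2
    have hsingle_norm : ∀ k : Fin n, ‖(Pi.single k 1 : Fin n → ℂ)‖ ≤ 1 := by
      intro k
      refine (pi_norm_le_iff_of_nonneg zero_le_one).2 fun i => ?_
      by_cases h : i = k <;> simp [h, Pi.single_apply]
    have hmemK : ∀ x ∈ Metric.ball z₀ r, ∀ t : ℂ, ‖t‖ ≤ r → ∀ k : Fin n,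
        x + t • (Pi.single k 1 : Fin n → ℂ) ∈ Metric.closedBall z₀ (2 * r) := by
      intro x hx t ht k
      rw [Metric.mem_closedBall, dist_eq_norm]
      have hre : x + t • (Pi.single k 1 : Fin n → ℂ) - z₀ = (x - z₀) + t • (Pi.single k 1 : Fin n → ℂ) := by
        abel
      rw [hre]
      refine (norm_add_le _ _).trans ?_
      have h1 : ‖x - z₀‖ ≤ r := by
        rw [← dist_eq_norm]
        exact (Metric.mem_ball.1 hx).le
      have h2 : ‖t • (Pi.single k 1 : Fin n → ℂ)‖ ≤ r := by
        rw [norm_smul]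
        calc ‖t‖ * ‖(Pi.single k 1 : Fin n → ℂ)‖ ≤ r * 1 :=
              mul_le_mul ht (hsingle_norm k) (norm_nonneg _) hr.le
          _ = r := mul_one r
      linarith
    have hFd : ∀ v : V, ∀ x ∈ Metric.ball z₀ r, ‖F' x v‖ ≤ ((n : ℝ) * κ' / r) * c v := by
      intro v x hx
      have hxK : x ∈ Metric.closedBall z₀ (2 * r) := by
        rw [Metric.mem_closedBall]
        have := Metric.mem_ball.1 hx
        linarith
      have hxS : x ∈ S := hTCS x (hKsub hxK)
      refine (aux_clm_norm _).trans ?_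
      have hk : ∀ k : Fin n, ‖F' x v ((Pi.single k 1 : Fin n → ℂ))‖ ≤ κ' * c v / r := by
        intro k
        have hder := hdirectional x hxS v k
        have hd : DiffContOnCl ℂ (fun t : ℂ => f (x + t • (Pi.single k 1 : Fin n → ℂ) + ι v))
            (Metric.ball 0 r) := by
          apply DifferentiableOn.diffContOnCl
          rw [closure_ball (0 : ℂ) hr.ne']
          intro t ht
          have htK : x + t • (Pi.single k 1 : Fin n → ℂ) ∈ Metric.closedBall z₀ (2 * r) := by
            refine hmemK x hx t ?_ k
            simpa [dist_zero_right] using Metric.mem_closedBall.1 ht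
          have htS : x + t • (Pi.single k 1 : Fin n → ℂ) ∈ S := hTCS _ (hKsub htK)
          have hin : DifferentiableAt ℂ
              (fun t : ℂ => x + t • (Pi.single k 1 : Fin n → ℂ)) t :=
            (differentiableAt_id.smul_const _).const_add x
          exact ((hdiffat _ htS v).comp t hin).differentiableWithinAt
        have hsph : ∀ t ∈ Metric.sphere (0 : ℂ) r,
            ‖f (x + t • (Pi.single k 1 : Fin n → ℂ) + ι v)‖ ≤ κ' * c v := by
          intro t ht
          have htK : x + t • (Pi.single k 1 : Fin n → ℂ) ∈ Metric.closedBall z₀ (2 * r) := by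
            refine hmemK x hx t ?_ k
            have : ‖t‖ = r := by simpa [dist_zero_right] using Metric.mem_sphere.1 ht
            exact this.le
          exact hκ' _ htK v
        have hcb := Complex.norm_deriv_le_of_forall_mem_sphere_norm_le hr hd hsph
        rwa [hder.deriv] at hcb
      calc ∑ k, ‖F' x v ((Pi.single k 1 : Fin n → ℂ))‖ ≤ ∑ _k : Fin n, (κ' * c v / r) :=
            Finset.sum_le_sum fun k _ => hk k
        _ = (n : ℝ) * (κ' * c v / r) := by
            rw [Finset.sum_const, Finset.card_univ, Fintype.card_fin, nsmul_eq_mul]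
        _ = ((n : ℝ) * κ' / r) * c v := by ring
    have hz₀S : z₀ ∈ S := hTCS z₀ hz₀
    have hF'meas : AEStronglyMeasurable (F' z₀) μ := by
      have hrepr : (F' z₀) = fun v => ∑ k, (F' z₀ v ((Pi.single k 1 : Fin n → ℂ))) •
          (ContinuousLinearMap.proj k : (Fin n → ℂ) →L[ℂ] ℂ) := by
        funext v
        exact aux_clm_repr _
      rw [hrepr]
      refine Finset.aestronglyMeasurable_fun_sum _ fun k _ => ?_
      refine AEStronglyMeasurable.smul_const ?_ _
      set t : ℕ → ℂ := fun mm => Complex.I * ((r * (1 / ((mm : ℝ) + 1)) : ℝ) : ℂ) with htdef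
      have ht_re : ∀ mm, (t mm).re = 0 := by
        intro mm
        simp [htdef, Complex.I_re, Complex.I_im]
      have ht_ne : ∀ mm, t mm ≠ 0 := by
        intro mm
        simp only [htdef, mul_ne_zero_iff]
        refine ⟨Complex.I_ne_zero, ?_⟩
        rw [Complex.ofReal_ne_zero]
        positivity
      have ht_tend : Tendsto t atTop (nhdsWithin (0 : ℂ) {x | x ≠ 0}) := by
        rw [tendsto_nhdsWithin_iff]
        constructor
        · have h1 : Tendsto (fun mm : ℕ => r * (1 / ((mm : ℝ) + 1))) atTop (nhds 0) := by
            simpa using (tendsto_one_div_add_atTop_nhds_zero_nat).const_mul r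
          have h2 : Tendsto (fun mm : ℕ => ((r * (1 / ((mm : ℝ) + 1)) : ℝ) : ℂ)) atTop
              (nhds (((0 : ℝ) : ℂ))) := by
            exact ((Complex.continuous_ofReal.tendsto (0 : ℝ)).comp h1).congr fun mm => rfl
          have h3 := h2.const_mul Complex.I
          rw [htdef]
          simpa using h3
        · exact Eventually.of_forall fun mm => ht_ne mm
      have hslope : ∀ (mm : ℕ) (v : V),
          (f (z₀ + t mm • (Pi.single k 1 : Fin n → ℂ) + ι v) - f (z₀ + ι v)) * (t mm)⁻¹
            = slope (fun s : ℂ => f (z₀ + s • (Pi.single k 1 : Fin n → ℂ) + ι v)) 0 (t mm) := by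
        intro mm v
        rw [slope_def_field, sub_zero, div_eq_mul_inv]
        congr 2
        simp
      refine aestronglyMeasurable_of_tendsto_ae atTop
        (f := fun mm (v : V) =>
          (f (z₀ + t mm • (Pi.single k 1 : Fin n → ℂ) + ι v) - f (z₀ + ι v)) * (t mm)⁻¹)
        (fun mm => ?_) (ae_of_all _ fun v => ?_)
      · have h1 : Continuous fun v : V => f ((z₀ + t mm • (Pi.single k 1 : Fin n → ℂ)) + ι v) :=
          hcont _ (hmemS' z₀ hz₀S (t mm) (ht_re mm) k)
        have h2 : Continuous fun v : V => f (z₀ + ι v) := hcont _ hz₀S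
        exact ((h1.sub h2).mul continuous_const).aestronglyMeasurable
      · have hder := hdirectional z₀ hz₀S v k
        rw [hasDerivAt_iff_tendsto_slope] at hder
        refine (hder.comp ht_tend).congr fun mm => ?_
        exact (hslope mm v).symm
    have hmain := hasFDerivAt_integral_of_dominated_of_fderiv_le
      (F := fun (x : Fin n → ℂ) (v : V) => f (x + ι v)) (F' := F')
      (bound := fun v => ((n : ℝ) * κ' / r) * c v) (μ := μ) (Metric.ball_mem_nhds z₀ hr)
      (Filter.eventually_of_mem (hTC.mem_nhds hz₀) fun x hx =>
        (hcont x (hTCS x hx)).aestronglyMeasurable)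
      (hInt z₀ hz₀) hF'meas (ae_of_all _ hFd) (hcInt.const_mul _)
      (ae_of_all _ fun v x hx => by
        have hxK : x ∈ Metric.closedBall z₀ (2 * r) := by
          rw [Metric.mem_closedBall]
          have := Metric.mem_ball.1 hx
          linarith
        exact (hdiffat x (hTCS x (hKsub hxK)) v).hasFDerivAt)
    have hd : DifferentiableAt ℂ (fun x : Fin n → ℂ => ∫ v : V, f (x + ι v) ∂μ) z₀ :=
      hmain.differentiableAt
    exact (hd.const_mul _).differentiableWithinAt
end

section
/- Let Σ be a complete fan of rational polyhedral cones in N_ℝ and let N″_ℝ ⊂ N_ℝ be a rational linear subspace. Then Σ″ := { σ ∩ N″_ℝ : σ ∈ Σ } is a complete fan of rational polyhedral cones in N″_ℝ: each σ ∩ N″_ℝ is a rational polyhedral cone, the collection is closed under intersections which are common faces, and the union of all these cones is N″_ℝ. -/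
/-- A rational polyhedral cone in `ℝ^d`: the set of nonnegative combinations of finitely
many integral vectors. -/
def IsRatPolyCone {d : ℕ} (σ : Set (Fin d → ℝ)) : Prop :=
  ∃ (k : ℕ) (g : Fin k → (Fin d → ℤ)),
    σ = {x | ∃ c : Fin k → ℝ, (∀ i, 0 ≤ c i) ∧ x = ∑ i, c i • (fun j => (g i j : ℝ))}

/-- `τ` is a face of the cone `σ`. -/
def IsFaceOfCone {d : ℕ} (τ σ : Set (Fin d → ℝ)) : Prop :=
  ∃ l : (Fin d → ℝ) →ₗ[ℝ] ℝ, (∀ x ∈ σ, 0 ≤ l x) ∧ τ = {x ∈ σ | l x = 0}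

/-- A complete fan of rational polyhedral cones. -/
structure IsCompleteFan {d : ℕ} (F : Finset (Set (Fin d → ℝ))) : Prop where
  rat : ∀ σ ∈ F, IsRatPolyCone σ
  strong : ∀ σ ∈ F, σ ∩ (-σ) ⊆ {0}
  face_mem : ∀ σ ∈ F, ∀ τ : Set (Fin d → ℝ), IsFaceOfCone τ σ → τ ∈ F
  inter_face : ∀ σ ∈ F, ∀ τ ∈ F, IsFaceOfCone (σ ∩ τ) σ ∧ IsFaceOfCone (σ ∩ τ) τ
  covers : ⋃ σ ∈ F, σ = Set.univ

set_option linter.unusedSectionVars false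
set_option maxHeartbeats 1000000

namespace Stmt16Aux

open Finset

variable {ι : Type} [Fintype ι]

def coneOf {κ : Type} [Fintype κ] (g : κ → ι → ℝ) : Set (ι → ℝ) :=
  {x | ∃ c : κ → ℝ, (∀ i, 0 ≤ c i) ∧ x = ∑ i, c i • g i}

variable {κ : Type} [Fintype κ]


theorem gen_mem_coneOf (g : κ → ι → ℝ) (i : κ) : g i ∈ coneOf g := by
  classical
  refine ⟨fun j => if i = j then 1 else 0, fun j => by positivity, ?_⟩
  simp [ite_smul, Finset.sum_ite_eq]

theorem zero_mem_coneOf (g : κ → ι → ℝ) : (0 : ι → ℝ) ∈ coneOf g :=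
  ⟨0, fun _ => le_rfl, by simp⟩

theorem add_mem_coneOf {g : κ → ι → ℝ} {x y : ι → ℝ} (hx : x ∈ coneOf g) (hy : y ∈ coneOf g) :
    x + y ∈ coneOf g := by
  obtain ⟨c, hc, rfl⟩ := hx; obtain ⟨b, hb, rfl⟩ := hy
  exact ⟨c + b, fun i => add_nonneg (hc i) (hb i), by simp [add_smul, Finset.sum_add_distrib]⟩

theorem smul_mem_coneOf {g : κ → ι → ℝ} {x : ι → ℝ} {a : ℝ} (ha : 0 ≤ a) (hx : x ∈ coneOf g) :
    a • x ∈ coneOf g := by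
  obtain ⟨c, hc, rfl⟩ := hx
  exact ⟨a • c, fun i => mul_nonneg ha (hc i), by
    rw [Finset.smul_sum]; exact Finset.sum_congr rfl fun i _ => by simp [smul_smul]⟩

theorem sum_smul_mem_coneOf {κ' : Type} [Fintype κ'] {g : κ → ι → ℝ} (c : κ' → ℝ)
    (v : κ' → ι → ℝ) (hc : ∀ a, 0 ≤ c a) (hv : ∀ a, v a ∈ coneOf g) :
    (∑ a, c a • v a) ∈ coneOf g :=
  Finset.sum_induction _ (· ∈ coneOf g) (fun a b ha hb => add_mem_coneOf ha hb)
    (zero_mem_coneOf g) (fun a _ => smul_mem_coneOf (hc a) (hv a))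

theorem coneOf_inter_halfspace (g : κ → ι → ℝ) (l : (ι → ℝ) →ₗ[ℝ] ℝ) :
    coneOf g ∩ {x | 0 ≤ l x} =
      coneOf (Sum.elim (fun i : κ => if 0 ≤ l (g i) then g i else 0)
        (fun p : κ × κ =>
          if 0 < l (g p.1) ∧ l (g p.2) < 0 then
            l (g p.1) • g p.2 + (- l (g p.2)) • g p.1 else 0)) := by
  classical
  apply Set.eq_of_subset_of_subset
  · rintro x ⟨⟨c, hc, rfl⟩, hlx⟩
    simp only [Set.mem_setOf_eq] at hlx
    set S : ℝ := ∑ i, if 0 < l (g i) then c i * l (g i) else 0 with hS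
    set T : ℝ := ∑ i, if l (g i) < 0 then c i * (-(l (g i))) else 0 with hT
    have hS0 : 0 ≤ S := Finset.sum_nonneg fun i _ => by
      split
      · exact mul_nonneg (hc i) (le_of_lt ‹_›)
      · exact le_rfl
    have hT0 : 0 ≤ T := Finset.sum_nonneg fun i _ => by
      split
      · exact mul_nonneg (hc i) (by linarith)
      · exact le_rfl
    have hlx' : l (∑ i, c i • g i) = S - T := by
      rw [map_sum, hS, hT, ← Finset.sum_sub_distrib]
      refine Finset.sum_congr rfl fun i _ => ?_
      rw [map_smul, smul_eq_mul]
      rcases lt_trichotomy (l (g i)) 0 with h | h | h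
      · rw [if_neg (by linarith), if_pos h]; ring
      · rw [if_neg (by simp [h]), if_neg (by simp [h]), h]; ring
      · rw [if_pos h, if_neg (by linarith)]; ring
    rw [hlx'] at hlx
    have hST : T ≤ S := by linarith
    rcases eq_or_lt_of_le hT0 with hT1 | hT1
    · -- T = 0 case
      have hcz : ∀ i, l (g i) < 0 → c i = 0 := by
        intro i hi
        have hterm := (Finset.sum_eq_zero_iff_of_nonneg (fun i _ => by
          split
          · exact mul_nonneg (hc i) (by linarith)
          · exact le_rfl)).mp hT1.symm i (Finset.mem_univ i)
        rw [if_pos hi] at hterm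
        rcases mul_eq_zero.mp hterm with h | h
        · exact h
        · linarith
      refine ⟨Sum.elim c 0, ?_, ?_⟩
      · rintro (i | p)
        · exact hc i
        · exact le_rfl
      · rw [Fintype.sum_sum_type]
        simp only [Sum.elim_inl, Sum.elim_inr, Pi.zero_apply, zero_smul,
          Finset.sum_const_zero, add_zero]
        refine Finset.sum_congr rfl fun i _ => ?_
        by_cases h0 : 0 ≤ l (g i)
        · rw [if_pos h0]
        · rw [if_neg h0, hcz i (lt_of_not_ge h0)]; simp
    · -- 0 < T case
      have hS1 : 0 < S := lt_of_lt_of_le hT1 hST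
      refine ⟨Sum.elim (fun i => if 0 < l (g i) then c i * (S - T) / S else c i)
          (fun p => if 0 < l (g p.1) ∧ l (g p.2) < 0 then c p.1 * c p.2 / S else 0), ?_, ?_⟩
      · rintro (i | p)
        · simp only [Sum.elim_inl]
          split
          · have h1 : 0 ≤ S - T := by linarith
            exact div_nonneg (mul_nonneg (hc i) h1) hS0
          · exact hc i
        · simp only [Sum.elim_inr]
          split
          · exact div_nonneg (mul_nonneg (hc p.1) (hc p.2)) hS0
          · exact le_rfl
      · rw [Fintype.sum_sum_type]
        simp only [Sum.elim_inl, Sum.elim_inr]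
        have hB : (∑ p : κ × κ,
            (if 0 < l (g p.1) ∧ l (g p.2) < 0 then c p.1 * c p.2 / S else 0) •
              (if 0 < l (g p.1) ∧ l (g p.2) < 0 then
                l (g p.1) • g p.2 + (- l (g p.2)) • g p.1 else 0))
            = (∑ j, if l (g j) < 0 then c j • g j else 0)
              + (∑ i, if 0 < l (g i) then (c i * (T / S)) • g i else 0) := by
          rw [Fintype.sum_prod_type]
          have hterm : ∀ i j : κ,
              (if 0 < l (g i) ∧ l (g j) < 0 then c i * c j / S else 0) •
                (if 0 < l (g i) ∧ l (g j) < 0 then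
                  l (g i) • g j + (- l (g j)) • g i else 0)
              = (if 0 < l (g i) then c i * l (g i) else 0) •
                  (if l (g j) < 0 then (c j / S) • g j else 0)
                + (if l (g j) < 0 then c j * (-(l (g j))) else 0) •
                  (if 0 < l (g i) then (c i / S) • g i else 0) := by
            intro i j
            rcases em (0 < l (g i)) with h1 | h1 <;> rcases em (l (g j) < 0) with h2 | h2
            · simp only [h1, h2, and_self, if_true, smul_add, smul_smul]
              congr 1 <;> congr 1 <;> ring
            · simp [h1, h2]
            · simp [h1, h2]
            · simp [h1, h2]
          rw [Finset.sum_congr rfl fun i _ => Finset.sum_congr rfl fun j _ => hterm i j]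
          simp only [Finset.sum_add_distrib]
          congr 1
          · rw [← Finset.sum_comm]
            calc (∑ j, ∑ i, (if 0 < l (g i) then c i * l (g i) else 0) •
                  (if l (g j) < 0 then (c j / S) • g j else 0))
                = ∑ j, S • (if l (g j) < 0 then (c j / S) • g j else 0) := by
                  refine Finset.sum_congr rfl fun j _ => ?_
                  rw [← Finset.sum_smul]
              _ = ∑ j, if l (g j) < 0 then c j • g j else 0 := by
                  refine Finset.sum_congr rfl fun j _ => ?_
                  split
                  · rw [smul_smul]
                    congr 1
                    field_simp
                  · exact smul_zero S
          · calc (∑ i, ∑ j, (if l (g j) < 0 then c j * (-(l (g j))) else 0) •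
                  (if 0 < l (g i) then (c i / S) • g i else 0))
                = ∑ i, T • (if 0 < l (g i) then (c i / S) • g i else 0) := by
                  refine Finset.sum_congr rfl fun i _ => ?_
                  rw [← Finset.sum_smul]
              _ = ∑ i, if 0 < l (g i) then (c i * (T / S)) • g i else 0 := by
                  refine Finset.sum_congr rfl fun i _ => ?_
                  split
                  · rw [smul_smul]
                    congr 1
                    ring
                  · exact smul_zero T
        rw [hB, add_comm (∑ j, if l (g j) < 0 then c j • g j else 0), ← add_assoc,
          ← Finset.sum_add_distrib, ← Finset.sum_add_distrib]
        refine Finset.sum_congr rfl fun i _ => ?_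
        rcases lt_trichotomy (l (g i)) 0 with h | h | h
        · rw [if_neg (by linarith), if_neg (not_le.mpr h), if_neg (by linarith), if_pos h]
          simp
        · rw [if_neg (by simp [h]), if_pos (le_of_eq h.symm), if_neg (by simp [h]),
            if_neg (by simp [h])]
          simp
        · rw [if_pos h, if_pos (le_of_lt h), if_pos h, if_neg (by linarith), add_zero,
            ← add_smul]
          congr 1
          field_simp
          ring
  · rintro x ⟨c, hc, rfl⟩
    constructor
    · refine sum_smul_mem_coneOf c _ hc ?_
      rintro (i | p)
      · simp only [Sum.elim_inl]
        split
        · exact gen_mem_coneOf g i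
        · exact zero_mem_coneOf g
      · simp only [Sum.elim_inr]
        split
        · next h =>
            exact add_mem_coneOf (smul_mem_coneOf h.1.le (gen_mem_coneOf g p.2))
              (smul_mem_coneOf (by linarith [h.2]) (gen_mem_coneOf g p.1))
        · exact zero_mem_coneOf g
    · show 0 ≤ l _
      rw [map_sum]
      refine Finset.sum_nonneg fun a _ => ?_
      rw [map_smul, smul_eq_mul]
      refine mul_nonneg (hc a) ?_
      rcases a with i | p
      · simp only [Sum.elim_inl]
        split
        · assumption
        · simp
      · simp only [Sum.elim_inr]
        split
        · rw [map_add, map_smul, map_smul, smul_eq_mul, smul_eq_mul]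
          nlinarith [mul_self_nonneg (l (g p.1))]
        · simp

def IsRatVec (x : ι → ℝ) : Prop := ∀ j, ∃ q : ℚ, x j = (q : ℝ)

theorem ratVec_zero : IsRatVec (0 : ι → ℝ) := fun _ => ⟨0, by simp⟩

theorem IsRatVec.add {x y : ι → ℝ} (hx : IsRatVec x) (hy : IsRatVec y) : IsRatVec (x + y) := by
  intro j
  obtain ⟨q, hq⟩ := hx j; obtain ⟨r, hr⟩ := hy j
  exact ⟨q + r, by simp [hq, hr]⟩

theorem IsRatVec.smul {x : ι → ℝ} (q : ℚ) (hx : IsRatVec x) : IsRatVec ((q : ℝ) • x) := by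
  intro j
  obtain ⟨r, hr⟩ := hx j
  exact ⟨q * r, by simp [hr]⟩

def QCone (σ : Set (ι → ℝ)) : Prop :=
  ∃ (κ : Type) (_ : Fintype κ) (g : κ → ι → ℝ), (∀ i, IsRatVec (g i)) ∧ σ = coneOf g

def PreservesRat (l : (ι → ℝ) →ₗ[ℝ] ℝ) : Prop :=
  ∀ x : ι → ℝ, IsRatVec x → ∃ q : ℚ, l x = (q : ℝ)

theorem fm_rat (g : κ → ι → ℝ) (l : (ι → ℝ) →ₗ[ℝ] ℝ) (hg : ∀ i, IsRatVec (g i))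
    (hl : PreservesRat l) :
    ∀ a, IsRatVec ((Sum.elim (fun i : κ => if 0 ≤ l (g i) then g i else 0)
        (fun p : κ × κ =>
          if 0 < l (g p.1) ∧ l (g p.2) < 0 then
            l (g p.1) • g p.2 + (- l (g p.2)) • g p.1 else 0)) a) := by
  rintro (i | p)
  · simp only [Sum.elim_inl]
    split
    · exact hg i
    · exact ratVec_zero
  · simp only [Sum.elim_inr]
    split
    · obtain ⟨q1, hq1⟩ := hl _ (hg p.1)
      obtain ⟨q2, hq2⟩ := hl _ (hg p.2)
      rw [hq1, hq2]
      have h2 : (-(q2 : ℝ)) = ((-q2 : ℚ) : ℝ) := by push_cast; ring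
      rw [h2]
      exact IsRatVec.add (IsRatVec.smul q1 (hg p.2)) (IsRatVec.smul (-q2) (hg p.1))
    · exact ratVec_zero

theorem PreservesRat.neg {l : (ι → ℝ) →ₗ[ℝ] ℝ} (hl : PreservesRat l) : PreservesRat (-l) := by
  intro x hx
  obtain ⟨q, hq⟩ := hl x hx
  exact ⟨-q, by simp [hq]⟩

theorem QCone.inter_hyperplane {σ : Set (ι → ℝ)} (hσ : QCone σ) (l : (ι → ℝ) →ₗ[ℝ] ℝ)
    (hl : PreservesRat l) : QCone (σ ∩ {x | l x = 0}) := by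
  obtain ⟨κ, _, g, hg, rfl⟩ := hσ
  have hsplit : coneOf g ∩ {x | l x = 0}
      = (coneOf g ∩ {x | 0 ≤ l x}) ∩ {x | 0 ≤ (-l) x} := by
    ext x
    simp only [Set.mem_inter_iff, Set.mem_setOf_eq, LinearMap.neg_apply, and_assoc]
    constructor
    · rintro ⟨h1, h2⟩
      exact ⟨h1, h2.ge, by simp [h2]⟩
    · rintro ⟨h1, h2, h3⟩
      exact ⟨h1, le_antisymm (by linarith) h2⟩
  rw [hsplit, coneOf_inter_halfspace g l, coneOf_inter_halfspace _ (-l)]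
  exact ⟨_, inferInstance, _, fm_rat _ _ (fm_rat g l hg hl) hl.neg, rfl⟩

theorem QCone.inter_kernels {σ : Set (ι → ℝ)} (hσ : QCone σ) {p : ℕ}
    (L : Fin p → ((ι → ℝ) →ₗ[ℝ] ℝ)) (hL : ∀ r, PreservesRat (L r)) :
    QCone (σ ∩ {x | ∀ r, L r x = 0}) := by
  induction p with
  | zero =>
      have : σ ∩ {x | ∀ r : Fin 0, L r x = 0} = σ := by
        ext x; simp [Fin.forall_fin_zero_pi]
      rwa [this]
  | succ n ih =>
      have hset : σ ∩ {x | ∀ r : Fin (n + 1), L r x = 0}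
          = (σ ∩ {x | ∀ r : Fin n, L r.castSucc x = 0}) ∩ {x | L (Fin.last n) x = 0} := by
        ext x
        simp only [Set.mem_inter_iff, Set.mem_setOf_eq, and_assoc]
        constructor
        · intro ⟨h1, h2⟩
          exact ⟨h1, fun r => h2 _, h2 _⟩
        · intro ⟨h1, h2, h3⟩
          refine ⟨h1, fun r => ?_⟩
          rcases Fin.eq_castSucc_or_eq_last r with ⟨r', rfl⟩ | rfl
          · exact h2 r'
          · exact h3
      rw [hset]
      exact QCone.inter_hyperplane (ih (fun r => L r.castSucc) (fun r => hL _)) _ (hL _)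

theorem QCone.image {ι' : Type} [Fintype ι'] {σ : Set (ι → ℝ)} (hσ : QCone σ)
    (A : (ι → ℝ) →ₗ[ℝ] (ι' → ℝ)) (hA : ∀ x, IsRatVec x → IsRatVec (A x)) :
    QCone (A '' σ) := by
  obtain ⟨κ, _, g, hg, rfl⟩ := hσ
  refine ⟨κ, inferInstance, fun i => A (g i), fun i => hA _ (hg i), ?_⟩
  ext x
  constructor
  · rintro ⟨y, ⟨c, hc, rfl⟩, rfl⟩
    refine ⟨c, hc, ?_⟩
    rw [map_sum]
    exact Finset.sum_congr rfl fun i _ => by rw [map_smul]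
  · rintro ⟨c, hc, rfl⟩
    refine ⟨∑ i, c i • g i, ⟨c, hc, rfl⟩, ?_⟩
    rw [map_sum]
    exact Finset.sum_congr rfl fun i _ => by rw [map_smul]

theorem qcone_orthant : QCone {y : ι → ℝ | ∀ j, 0 ≤ y j} := by
  classical
  refine ⟨ι, inferInstance, fun i => Pi.single i 1, fun i j => ?_, ?_⟩
  · rcases eq_or_ne i j with rfl | h
    · exact ⟨1, by simp⟩
    · exact ⟨0, by simp [Pi.single_apply, h]⟩
  · ext y
    constructor
    · intro hy
      refine ⟨y, hy, funext fun j => ?_⟩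
      rw [Finset.sum_apply]
      simp [Pi.single_apply]
    · rintro ⟨c, hc, rfl⟩ j
      rw [Finset.sum_apply]
      refine Finset.sum_nonneg fun i _ => ?_
      simp only [Pi.smul_apply, Pi.single_apply, smul_eq_mul]
      split
      · simpa using hc i
      · simp



theorem coneOf_reindex {κ' : Type} [Fintype κ'] (e : κ' ≃ κ) (g : κ → ι → ℝ) :
    coneOf (g ∘ e) = coneOf g := by
  ext x
  constructor
  · rintro ⟨c, hc, rfl⟩
    refine ⟨c ∘ e.symm, fun i => hc _, ?_⟩
    rw [← Equiv.sum_comp e (fun i => (c ∘ e.symm) i • g i)]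
    simp [Function.comp]
  · rintro ⟨c, hc, rfl⟩
    exact ⟨c ∘ e, fun i => hc _, (Equiv.sum_comp e (fun i => c i • g i)).symm⟩

theorem coneOf_smul (g : κ → ι → ℝ) (a : κ → ℝ) (ha : ∀ i, 0 < a i) :
    coneOf (fun i => a i • g i) = coneOf g := by
  ext x
  constructor
  · rintro ⟨c, hc, rfl⟩
    refine ⟨fun i => c i * a i, fun i => mul_nonneg (hc i) (ha i).le, ?_⟩
    exact Finset.sum_congr rfl fun i _ => by simp [smul_smul]
  · rintro ⟨c, hc, rfl⟩
    refine ⟨fun i => c i / a i, fun i => div_nonneg (hc i) (ha i).le, ?_⟩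
    refine Finset.sum_congr rfl fun i _ => ?_
    rw [smul_smul, div_mul_cancel₀ _ (ha i).ne']

end Stmt16Aux

namespace Stmt16Aux

theorem QCone.isRatPolyCone {d : ℕ} {σ : Set (Fin d → ℝ)} (h : QCone σ) : IsRatPolyCone σ := by
  classical
  obtain ⟨κ, _, g, hg, rfl⟩ := h
  obtain ⟨e⟩ : Nonempty (Fin (Fintype.card κ) ≃ κ) := ⟨(Fintype.equivFin κ).symm⟩
  choose q hq using fun (i : κ) (j : Fin d) => hg i j
  set N : κ → ℕ := fun i => ∏ j, (q i j).den with hN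
  have hNpos : ∀ i, 0 < N i := fun i => Finset.prod_pos fun j _ => (q i j).den_pos
  have key : ∀ (i : κ) (j : Fin d), ((((N i : ℚ) * q i j).num : ℝ)) = (N i : ℝ) * g i j := by
    intro i j
    obtain ⟨m, hm⟩ := Finset.dvd_prod_of_mem (fun j => (q i j).den) (Finset.mem_univ j)
    have h1 : (N i : ℚ) * q i j = (((m : ℤ) * (q i j).num : ℤ) : ℚ) := by
      have hNq : (N i : ℚ) = (m : ℚ) * ((q i j).den : ℚ) := by
        rw [hN]; push_cast [hm]; ring
      rw [hNq, mul_assoc, mul_comm ((q i j).den : ℚ) (q i j), Rat.mul_den_eq_num]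
      push_cast; ring
    rw [h1, Rat.num_intCast, hq i j]
    have h2 := congrArg (fun r : ℚ => (r : ℝ)) h1
    push_cast at h2 ⊢
    linarith
  refine ⟨Fintype.card κ, fun i j => ((N (e i) : ℚ) * q (e i) j).num, ?_⟩
  have hfam : (fun (i : Fin (Fintype.card κ)) => fun j =>
        ((((N (e i) : ℚ) * q (e i) j).num : ℤ) : ℝ))
      = fun i => (N (e i) : ℝ) • ((g ∘ e) i) := by
    funext i j
    exact key (e i) j
  have : coneOf (fun (i : Fin (Fintype.card κ)) => fun j =>
        ((((N (e i) : ℚ) * q (e i) j).num : ℤ) : ℝ)) = coneOf g := by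
    rw [hfam, coneOf_smul ((g ∘ e)) (fun i => (N (e i) : ℝ))
      (fun i => by exact_mod_cast hNpos (e i)), coneOf_reindex e g]
  rw [← this]
  rfl

theorem isRatPolyCone_iff_exists {d : ℕ} {σ : Set (Fin d → ℝ)} (h : IsRatPolyCone σ) :
    QCone σ := by
  obtain ⟨k, g, rfl⟩ := h
  exact ⟨Fin k, inferInstance, fun i j => (g i j : ℝ),
    fun i j => ⟨(g i j : ℚ), by push_cast; rfl⟩, rfl⟩

theorem sum_rat {κ'' : Type} [Fintype κ''] (f : κ'' → ℝ) (hf : ∀ i, ∃ q : ℚ, f i = (q : ℝ)) :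
    ∃ q : ℚ, ∑ i, f i = (q : ℝ) := by
  choose qf hqf using hf
  refine ⟨∑ i, qf i, ?_⟩
  rw [Finset.sum_congr rfl fun i _ => hqf i]
  push_cast
  rfl

theorem ratPoly_inter_span {d m : ℕ} {σ : Set (Fin d → ℝ)} (hσ : IsRatPolyCone σ)
    (w : Fin m → (Fin d → ℤ)) :
    IsRatPolyCone (σ ∩ ↑(Submodule.span ℝ
      (Set.range fun i => (fun j => ((w i j : ℝ)) : Fin d → ℝ)))) := by
  classical
  obtain ⟨κ, _, g, hg, rfl⟩ := isRatPolyCone_iff_exists hσ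
  set wr : Fin m → Fin d → ℝ := fun i j => (w i j : ℝ) with hwr
  set A : ((κ ⊕ (Fin m ⊕ Fin m)) → ℝ) →ₗ[ℝ] (Fin d → ℝ) :=
    ∑ i : κ, (LinearMap.proj (Sum.inl i)).smulRight (g i) with hA
  set B : ((κ ⊕ (Fin m ⊕ Fin m)) → ℝ) →ₗ[ℝ] (Fin d → ℝ) :=
    (∑ j : Fin m, (LinearMap.proj (Sum.inr (Sum.inl j))).smulRight (wr j)) -
      (∑ j : Fin m, (LinearMap.proj (Sum.inr (Sum.inr j))).smulRight (wr j)) with hB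
  have hAy : ∀ y, A y = ∑ i, y (Sum.inl i) • g i := by
    intro y
    rw [hA]
    simp [LinearMap.coe_sum, Finset.sum_apply, LinearMap.smulRight_apply]
  have hBy : ∀ y, B y = ∑ j, (y (Sum.inr (Sum.inl j)) - y (Sum.inr (Sum.inr j))) • wr j := by
    intro y
    rw [hB]
    simp only [LinearMap.sub_apply, LinearMap.coe_sum, Finset.sum_apply,
      LinearMap.smulRight_apply, LinearMap.proj_apply, ← Finset.sum_sub_distrib]
    exact Finset.sum_congr rfl fun j _ => (sub_smul _ _ _).symm
  set L : Fin d → (((κ ⊕ (Fin m ⊕ Fin m)) → ℝ) →ₗ[ℝ] ℝ) :=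
    fun r => (LinearMap.proj r).comp (A - B) with hLdef
  have hL : ∀ r y, L r y = A y r - B y r := by
    intro r y
    rw [hLdef]
    simp
  have hLrat : ∀ r, PreservesRat (L r) := by
    intro r y hy
    rw [hL, hAy, hBy]
    have h1 : ∃ q : ℚ, (∑ i, y (Sum.inl i) • g i) r = (q : ℝ) := by
      rw [Finset.sum_apply]
      refine sum_rat _ fun i => ?_
      obtain ⟨q1, hq1⟩ := hy (Sum.inl i)
      obtain ⟨q2, hq2⟩ := hg i r
      exact ⟨q1 * q2, by simp [hq1, hq2]⟩
    have h2 : ∃ q : ℚ, (∑ j, (y (Sum.inr (Sum.inl j)) - y (Sum.inr (Sum.inr j))) • wr j) r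
        = (q : ℝ) := by
      rw [Finset.sum_apply]
      refine sum_rat _ fun j => ?_
      obtain ⟨q1, hq1⟩ := hy (Sum.inr (Sum.inl j))
      obtain ⟨q2, hq2⟩ := hy (Sum.inr (Sum.inr j))
      refine ⟨(q1 - q2) * (w j r : ℚ), ?_⟩
      simp only [Pi.smul_apply, smul_eq_mul, hq1, hq2, hwr]
      push_cast
      ring
    obtain ⟨q1, hq1⟩ := h1
    obtain ⟨q2, hq2⟩ := h2
    exact ⟨q1 - q2, by rw [hq1, hq2]; push_cast; ring⟩
  have hArat : ∀ y, IsRatVec y → IsRatVec (A y) := by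
    intro y hy r
    rw [hAy, Finset.sum_apply]
    refine sum_rat _ fun i => ?_
    obtain ⟨q1, hq1⟩ := hy (Sum.inl i)
    obtain ⟨q2, hq2⟩ := hg i r
    exact ⟨q1 * q2, by simp [hq1, hq2]⟩
  have hset : coneOf g ∩ ↑(Submodule.span ℝ
        (Set.range fun i => (fun j => ((w i j : ℝ)) : Fin d → ℝ)))
      = A '' ({y | ∀ a, 0 ≤ y a} ∩ {y | ∀ r, L r y = 0}) := by
    ext x
    simp only [Set.mem_inter_iff, Set.mem_image, Set.mem_setOf_eq, SetLike.mem_coe,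
      Submodule.mem_span_range_iff_exists_fun]
    constructor
    · rintro ⟨⟨c, hc, rfl⟩, b, hb⟩
      refine ⟨Sum.elim c (Sum.elim (fun j => max (b j) 0) (fun j => max (-(b j)) 0)),
        ⟨?_, ?_⟩, ?_⟩
      · rintro (i | j | j)
        exacts [hc i, le_max_right _ _, le_max_right _ _]
      · intro r
        rw [hL, hAy, hBy]
        simp only [Sum.elim_inl, Sum.elim_inr]
        have hb2 : (∑ x : Fin m, (max (b x) 0 - max (-(b x)) 0) • wr x) = ∑ i, c i • g i := by
          rw [Finset.sum_congr rfl fun x _ => by rw [max_zero_sub_eq_self (b x)]]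
          exact hb
        rw [hb2, sub_self]
      · rw [hAy]
        simp only [Sum.elim_inl]
    · rintro ⟨y, ⟨hy0, hyL⟩, rfl⟩
      constructor
      · exact ⟨fun i => y (Sum.inl i), fun i => hy0 _, by rw [hAy]⟩
      · refine ⟨fun j => y (Sum.inr (Sum.inl j)) - y (Sum.inr (Sum.inr j)), ?_⟩
        have hAB : A y = B y := by
          funext r
          have := hyL r
          rw [hL] at this
          linarith
        rw [hAB, hBy]
  rw [hset]
  exact ((qcone_orthant.inter_kernels L hLrat).image A hArat).isRatPolyCone

end Stmt16Aux

/-- restricting a complete fan `Σ` to a rational linear subspace `W = N″_ℝ`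
yields a complete fan `Σ″ = { σ ∩ W }` in `W`: each `σ ∩ W` is a rational polyhedral cone,
pairwise intersections of members are common faces, and the union of all members is `W`. -/
theorem stmt16 {d : ℕ} (F : Finset (Set (Fin d → ℝ))) (hF : IsCompleteFan F)
    (W : Submodule ℝ (Fin d → ℝ))
    (hW : ∃ (k : ℕ) (w : Fin k → (Fin d → ℤ)),
      W = Submodule.span ℝ (Set.range fun i => (fun j => ((w i j : ℝ)) : Fin d → ℝ))) :
    (∀ σ ∈ F, IsRatPolyCone (σ ∩ (W : Set (Fin d → ℝ)))) ∧
    (∀ σ ∈ F, ∀ τ ∈ F,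
      IsFaceOfCone ((σ ∩ (W : Set (Fin d → ℝ))) ∩ (τ ∩ (W : Set (Fin d → ℝ))))
        (σ ∩ (W : Set (Fin d → ℝ))) ∧
      IsFaceOfCone ((σ ∩ (W : Set (Fin d → ℝ))) ∩ (τ ∩ (W : Set (Fin d → ℝ))))
        (τ ∩ (W : Set (Fin d → ℝ)))) ∧
    (⋃ σ ∈ F, (σ ∩ (W : Set (Fin d → ℝ)))) = (W : Set (Fin d → ℝ)) := by
  obtain ⟨m, w, hWs⟩ := hW
  refine ⟨?_, ?_, ?_⟩
  · intro σ hσ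
    rw [hWs]
    exact Stmt16Aux.ratPoly_inter_span (hF.rat σ hσ) w
  · intro σ hσ τ hτ
    obtain ⟨⟨l₁, hl₁, he₁⟩, ⟨l₂, hl₂, he₂⟩⟩ := hF.inter_face σ hσ τ hτ
    constructor
    · refine ⟨l₁, fun x hx => hl₁ x hx.1, ?_⟩
      ext x
      have h := Set.ext_iff.mp he₁ x
      simp only [Set.mem_inter_iff, Set.mem_setOf_eq] at h ⊢
      tauto
    · refine ⟨l₂, fun x hx => hl₂ x hx.1, ?_⟩
      ext x
      have h := Set.ext_iff.mp he₂ x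
      simp only [Set.mem_inter_iff, Set.mem_setOf_eq] at h ⊢
      tauto
  · ext x
    simp only [Set.mem_iUnion, Set.mem_inter_iff, exists_prop]
    constructor
    · rintro ⟨σ, hσ, hxσ, hxW⟩
      exact hxW
    · intro hxW
      have hx : x ∈ ⋃ σ ∈ F, σ := by rw [hF.covers]; trivial
      simp only [Set.mem_iUnion, exists_prop] at hx
      obtain ⟨σ, hσ, hxσ⟩ := hx
      exact ⟨σ, hσ, hxσ, hxW⟩
end

section
/- Let f be a function holomorphic in the closed strip a ≤ Re(s) ≤ b in ℂ satisfying |f(s)| ≤ c₁ e^{|Im(s)|^{c₂}} in the strip for some constants c₁, c₂ > 0, together with the boundary bounds |f(a+it)| ≤ M_a (1+|t|)^{δ} and |f(b+it)| ≤ M_b for all t ∈ ℝ, where M_a, M_b > 0 and δ ≥ 0. Then for all a ≤ σ ≤ b and t ∈ ℝ: |f(σ+it)| ≤ M_b^{(σ−a)/(b−a)} · ( M_a (1+|t|)^{δ} )^{(b−σ)/(b−a)} · C, for a constant C depending only on a, b, δ. -/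
open Complex Filter Set

/-- Phragmén–Lindelöf / Rademacher convexity principle: there is a constant
`C = C(a,b,δ) > 0` such that every function `f` holomorphic in the closed strip
`a ≤ Re s ≤ b`, of at most finite-order growth `|f| ≤ c₁ e^{|Im s|^{c₂}}` there, and with
boundary bounds `|f(a+it)| ≤ M_a (1+|t|)^δ` and `|f(b+it)| ≤ M_b`, satisfies
`|f(σ+it)| ≤ M_b^{(σ-a)/(b-a)} (M_a (1+|t|)^δ)^{(b-σ)/(b-a)} C` in the strip. -/
theorem stmt18 (a b δ : ℝ) (hab : a < b) (hδ : 0 ≤ δ) :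
    ∃ C : ℝ, 0 < C ∧
      ∀ (f : ℂ → ℂ) (c₁ c₂ Ma Mb : ℝ), 0 < c₁ → 0 < c₂ → 0 < Ma → 0 < Mb →
        DifferentiableOn ℂ f {s : ℂ | a ≤ s.re ∧ s.re ≤ b} →
        (∀ s ∈ {s : ℂ | a ≤ s.re ∧ s.re ≤ b}, ‖f s‖ ≤ c₁ * Real.exp (|s.im| ^ c₂)) →
        (∀ t : ℝ, ‖f (a + t * I)‖ ≤ Ma * (1 + |t|) ^ δ) →
        (∀ t : ℝ, ‖f (b + t * I)‖ ≤ Mb) →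
        ∀ σ t : ℝ, a ≤ σ → σ ≤ b →
          ‖f (σ + t * I)‖ ≤
            Mb ^ ((σ - a) / (b - a)) * (Ma * (1 + |t|) ^ δ) ^ ((b - σ) / (b - a)) * C := by
  have hba : (0:ℝ) < b - a := sub_pos.2 hab
  refine ⟨(2:ℝ) ^ δ * (1 + (b - a)) ^ δ, by positivity, ?_⟩
  intro f c₁ c₂ Ma Mb hc₁ hc₂ hMa hMb hdf hgrow hbda hbdb σ t haσ hσb
  set ψ : ℂ → ℂ := fun s => s - (a:ℂ) + 1 - (t:ℂ) * I with hψdef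
  have hψre : ∀ s : ℂ, (ψ s).re = s.re - a + 1 := by intro s; simp [hψdef]
  have hψim : ∀ s : ℂ, (ψ s).im = s.im - t := by intro s; simp [hψdef]
  have hψ1 : ∀ s : ℂ, a ≤ s.re → 1 ≤ ‖ψ s‖ := by
    intro s hs
    calc (1:ℝ) ≤ (ψ s).re := by rw [hψre]; linarith
    _ ≤ |(ψ s).re| := le_abs_self _
    _ ≤ ‖ψ s‖ := Complex.abs_re_le_norm _
  set g : ℂ → ℂ := fun s => f s * ψ s ^ (-(δ:ℂ)) with hgdef
  have hgnorm : ∀ s : ℂ, ‖g s‖ = ‖f s‖ * ‖ψ s‖ ^ (-δ) := by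
    intro s
    rw [hgdef]
    simp only [norm_mul]
    congr 1
    rw [show (-(δ:ℂ)) = ((-δ : ℝ) : ℂ) by push_cast; ring, Complex.norm_cpow_real]
  have hgle : ∀ s : ℂ, a ≤ s.re → ‖g s‖ ≤ ‖f s‖ := by
    intro s hs
    rw [hgnorm]
    exact mul_le_of_le_one_right (norm_nonneg _)
      (Real.rpow_le_one_of_one_le_of_nonpos (hψ1 s hs) (neg_nonpos.2 hδ))
  have hψd : Differentiable ℂ ψ := by
    rw [hψdef]; exact ((differentiable_id.sub_const _).add_const _).sub_const _
  have hdgS : DifferentiableOn ℂ g {s : ℂ | a ≤ s.re ∧ s.re ≤ b} := by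
    refine hdf.mul ?_
    intro s hs
    refine ((hψd s).cpow (differentiableAt_const _) ?_).differentiableWithinAt
    rw [Complex.mem_slitPlane_iff]
    left; rw [hψre]; linarith [hs.1]
  have hSclosed : IsClosed {s : ℂ | a ≤ s.re ∧ s.re ≤ b} := by
    have : {s : ℂ | a ≤ s.re ∧ s.re ≤ b} = Complex.re ⁻¹' Set.Icc a b := rfl
    rw [this]; exact isClosed_Icc.preimage Complex.continuous_re
  have hUS : Complex.re ⁻¹' Set.Ioo a b ⊆ {s : ℂ | a ≤ s.re ∧ s.re ≤ b} :=
    fun s hs => ⟨hs.1.le, hs.2.le⟩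
  have hd : DiffContOnCl ℂ g (Complex.re ⁻¹' Set.Ioo a b) :=
    ⟨hdgS.mono hUS, hdgS.continuousOn.mono (closure_minimal hUS hSclosed)⟩
  -- growth condition
  set c : ℝ := Real.pi / (2 * (b - a)) with hcdef
  have hc0 : 0 < c := by positivity
  have hc : c < Real.pi / (b - a) := by
    rw [hcdef, div_lt_div_iff₀ (by positivity) hba]
    nlinarith [Real.pi_pos]
  have hev : ∀ᶠ x : ℝ in atTop, x ^ c₂ ≤ Real.exp (c * x) := by
    have h1 : (fun x : ℝ => c₂ * Real.log x) =o[atTop] (fun x : ℝ => x) :=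
      (Real.isLittleO_log_id_atTop).const_mul_left c₂
    filter_upwards [h1.def hc0, eventually_ge_atTop (1:ℝ)] with x hx h1x
    have hxpos : (0:ℝ) < x := by linarith
    rw [Real.rpow_def_of_pos hxpos]
    apply Real.exp_le_exp.2
    have h : |c₂| * |Real.log x| ≤ c * |x| := by simpa [Real.norm_eq_abs, abs_mul] using hx
    calc Real.log x * c₂ = c₂ * Real.log x := by ring
    _ ≤ |c₂ * Real.log x| := le_abs_self _
    _ = |c₂| * |Real.log x| := abs_mul _ _
    _ ≤ c * |x| := h
    _ = c * x := by rw [abs_of_pos hxpos]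
  have hO : g =O[comap (_root_.abs ∘ Complex.im) atTop ⊓ 𝓟 (Complex.re ⁻¹' Set.Ioo a b)]
      fun z => Real.exp (1 * Real.exp (c * |z.im|)) := by
    apply Asymptotics.IsBigO.of_bound c₁
    have h2 : ∀ᶠ z : ℂ in comap (_root_.abs ∘ Complex.im) atTop,
        |z.im| ^ c₂ ≤ Real.exp (c * |z.im|) := by
      rw [Filter.eventually_comap]
      filter_upwards [hev] with x hx z hz
      simp only [Function.comp_apply] at hz
      rw [hz]; exact hx
    have h3 : ∀ᶠ z : ℂ in comap (_root_.abs ∘ Complex.im) atTop ⊓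
        𝓟 (Complex.re ⁻¹' Set.Ioo a b), z ∈ Complex.re ⁻¹' Set.Ioo a b :=
      Filter.eventually_inf_principal.mpr (Filter.Eventually.of_forall fun z h => h)
    filter_upwards [h2.filter_mono inf_le_left, h3] with z h2z h3z
    have hfz := hgrow z (hUS h3z)
    have : ‖g z‖ ≤ c₁ * Real.exp (|z.im| ^ c₂) := le_trans (hgle z (hUS h3z).1) hfz
    refine this.trans ?_
    rw [Real.norm_eq_abs, abs_of_pos (Real.exp_pos _), one_mul]
    exact mul_le_mul_of_nonneg_left (Real.exp_le_exp.2 h2z) hc₁.le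
  -- boundary bounds for g
  set A : ℝ := Ma * (1 + |t|) ^ δ * 2 ^ δ with hAdef
  have hA0 : 0 < A := by positivity
  have hbound_a : ∀ z : ℂ, z.re = a → ‖g z‖ ≤ A := by
    intro z hz
    set v : ℝ := ‖ψ z‖ with hvdef
    have hv1 : 1 ≤ v := hψ1 z (le_of_eq hz.symm)
    have hv0 : 0 < v := lt_of_lt_of_le one_pos hv1
    set u : ℝ := |z.im - t| with hudef
    have huv : 1 + u ≤ 2 * v := by
      have h1 : u ≤ v := by
        rw [hudef, hvdef, ← hψim z]
        exact Complex.abs_im_le_norm _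
      linarith
    have hfz : ‖f z‖ ≤ Ma * (1 + |z.im|) ^ δ := by
      have h := hbda z.im
      rwa [show ((a:ℂ) + ↑z.im * I : ℂ) = z from by rw [← hz]; exact Complex.re_add_im z] at h
    have himle : 1 + |z.im| ≤ (1 + |t|) * (1 + u) := by
      have : |z.im| ≤ |t| + u := by
        rw [hudef]
        calc |z.im| = |t + (z.im - t)| := by ring_nf
        _ ≤ |t| + |z.im - t| := abs_add_le _ _
      nlinarith [abs_nonneg t, abs_nonneg (z.im - t)]
    have key : ‖f z‖ ≤ A * v ^ δ := by
      calc ‖f z‖ ≤ Ma * (1 + |z.im|) ^ δ := hfz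
      _ ≤ Ma * ((1 + |t|) * (2 * v)) ^ δ := by
          apply mul_le_mul_of_nonneg_left _ hMa.le
          apply Real.rpow_le_rpow (by positivity) _ hδ
          calc 1 + |z.im| ≤ (1 + |t|) * (1 + u) := himle
          _ ≤ (1 + |t|) * (2 * v) := by nlinarith [abs_nonneg t]
      _ = A * v ^ δ := by
          rw [hAdef, Real.mul_rpow (by positivity) (by positivity),
            Real.mul_rpow (by positivity) (by positivity)]
          ring
    have hvne : v ^ δ ≠ 0 := by positivity
    calc ‖g z‖ = ‖f z‖ * (v ^ δ)⁻¹ := by rw [hgnorm, Real.rpow_neg hv0.le]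
    _ ≤ (A * v ^ δ) * (v ^ δ)⁻¹ := by
        apply mul_le_mul_of_nonneg_right key (by positivity)
    _ = A := by field_simp
  have hbound_b : ∀ z : ℂ, z.re = b → ‖g z‖ ≤ Mb := by
    intro z hz
    refine (hgle z (by rw [hz]; exact hab.le)).trans ?_
    have h := hbdb z.im
    rwa [show ((b:ℂ) + ↑z.im * I : ℂ) = z from by rw [← hz]; exact Complex.re_add_im z] at h
  -- Phragmen-Lindelof: g bounded on the strip
  have hPL : ∀ z : ℂ, a ≤ z.re → z.re ≤ b → ‖g z‖ ≤ max A Mb := by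
    intro z h1 h2
    exact PhragmenLindelof.vertical_strip hd ⟨c, hc, 1, hO⟩
      (fun w hw => (hbound_a w hw).trans (le_max_left _ _))
      (fun w hw => (hbound_b w hw).trans (le_max_right _ _)) h1 h2
  -- Hadamard three lines on rescaled strip
  set φ : ℂ → ℂ := fun w => (a:ℂ) + ((b - a : ℝ) : ℂ) * w with hφdef
  have hφre : ∀ w : ℂ, (φ w).re = a + (b - a) * w.re := by
    intro w; simp [hφdef]
  have hφd : Differentiable ℂ φ := by
    rw [hφdef]; exact (differentiable_const _).add ((differentiable_const _).mul differentiable_id)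
  have hmaps : Set.MapsTo φ (Complex.re ⁻¹' Set.Ioo 0 1) (Complex.re ⁻¹' Set.Ioo a b) := by
    intro w hw
    simp only [Set.mem_preimage, Set.mem_Ioo] at hw ⊢
    rw [hφre]
    constructor <;> nlinarith [hw.1, hw.2]
  have hdh : DiffContOnCl ℂ (g ∘ φ) (Complex.HadamardThreeLines.verticalStrip 0 1) :=
    hd.comp hφd.diffContOnCl hmaps
  have hB : BddAbove ((norm ∘ (g ∘ φ)) '' (Complex.HadamardThreeLines.verticalClosedStrip 0 1)) := by
    refine ⟨max A Mb, ?_⟩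
    rintro y ⟨w, hw, rfl⟩
    have hw' : w.re ∈ Set.Icc (0:ℝ) 1 := hw
    exact hPL (φ w) (by rw [hφre]; nlinarith [hw'.1, hw'.2])
      (by rw [hφre]; nlinarith [hw'.1, hw'.2])
  set θ : ℝ := (σ - a) / (b - a) with hθdef
  have hθ0 : 0 ≤ θ := div_nonneg (by linarith) hba.le
  have hθ1 : θ ≤ 1 := by rw [hθdef, div_le_one hba]; linarith
  set w₀ : ℂ := (θ : ℂ) + ((t / (b - a) : ℝ) : ℂ) * I with hw₀def
  have hw₀re : w₀.re = θ := by
    rw [hw₀def]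
    simp only [Complex.add_re, Complex.mul_re, Complex.ofReal_re, Complex.ofReal_im,
      Complex.I_re, Complex.I_im]
    ring
  have hφw₀ : φ w₀ = ↑σ + ↑t * I := by
    have hba' : ((b - a : ℝ) : ℂ) ≠ 0 := by
      exact_mod_cast hba.ne'
    have e1 : (b - a) * θ = σ - a := by rw [hθdef]; field_simp
    have e2 : (b - a) * (t / (b - a)) = t := by field_simp
    calc φ w₀ = ↑a + (↑((b - a) * θ) + ↑((b - a) * (t / (b - a))) * I) := by
          rw [hφdef, hw₀def]; push_cast; ring
    _ = ↑σ + ↑t * I := by rw [e1, e2]; push_cast; ring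
  have hHad := Complex.HadamardThreeLines.norm_le_interp_of_mem_verticalClosedStrip' (f := g ∘ φ) zero_lt_one
    (z := w₀) (a := A) (b := Mb)
    (by rw [Complex.HadamardThreeLines.verticalClosedStrip]
        simp only [Set.mem_preimage, hw₀re]
        exact ⟨hθ0, hθ1⟩)
    hdh hB
    (fun z hz => hbound_a (φ z) (by
      have hz' : z.re = 0 := hz
      rw [hφre, hz']; ring))
    (fun z hz => hbound_b (φ z) (by
      have hz' : z.re = 1 := hz
      rw [hφre, hz']; ring))
  simp only [Function.comp_apply] at hHad
  rw [hφw₀, hw₀re] at hHad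
  simp only [sub_zero, div_one] at hHad
  -- unwind
  have hψval : ‖(ψ (↑σ + ↑t * I))‖ = σ - a + 1 := by
    have : ψ (↑σ + ↑t * I) = ((σ - a + 1 : ℝ) : ℂ) := by
      rw [hψdef]; push_cast; ring
    rw [this, Complex.norm_real, Real.norm_eq_abs, abs_of_pos (by linarith)]
  have hv0 : (0:ℝ) < σ - a + 1 := by linarith
  have hfg : ‖f (↑σ + ↑t * I)‖ = ‖g (↑σ + ↑t * I)‖ * (σ - a + 1) ^ δ := by
    rw [hgnorm, hψval, Real.rpow_neg hv0.le, mul_assoc, inv_mul_cancel₀ (by positivity), mul_one]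
  have hθc : (b - σ) / (b - a) = 1 - θ := by rw [hθdef]; field_simp; ring
  have h2δ : ((2:ℝ) ^ δ) ^ (1 - θ) ≤ (2:ℝ) ^ δ := by
    have h1 : (1:ℝ) ≤ (2:ℝ) ^ δ := by
      rw [show (1:ℝ) = (2:ℝ) ^ (0:ℝ) from (Real.rpow_zero 2).symm]
      exact Real.rpow_le_rpow_of_exponent_le one_le_two hδ
    calc ((2:ℝ) ^ δ) ^ (1 - θ) ≤ ((2:ℝ) ^ δ) ^ (1:ℝ) :=
          Real.rpow_le_rpow_of_exponent_le h1 (by linarith)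
    _ = (2:ℝ) ^ δ := Real.rpow_one _
  rw [hfg, hθc]
  calc ‖g (↑σ + ↑t * I)‖ * (σ - a + 1) ^ δ
      ≤ (A ^ (1 - θ) * Mb ^ θ) * (1 + (b - a)) ^ δ :=
        mul_le_mul hHad (Real.rpow_le_rpow hv0.le (by linarith) hδ) (by positivity)
          (by positivity)
    _ = (Ma * (1 + |t|) ^ δ) ^ (1 - θ) * ((2:ℝ) ^ δ) ^ (1 - θ) * Mb ^ θ
          * (1 + (b - a)) ^ δ := by
        rw [hAdef, Real.mul_rpow (by positivity) (by positivity)]; try ring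
    _ ≤ (Ma * (1 + |t|) ^ δ) ^ (1 - θ) * (2:ℝ) ^ δ * Mb ^ θ * (1 + (b - a)) ^ δ := by
        gcongr
    _ = Mb ^ θ * (Ma * (1 + |t|) ^ δ) ^ (1 - θ) * ((2:ℝ) ^ δ * (1 + (b - a)) ^ δ) := by
        ring
end
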